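/- arXiv:1010.0462 — 4 statements merged into one kernel-verified Lean document; each statement's English description precedes it below -/
import Mathlib

section
/- Exact version of Melleray's theorem: let 𝕌 be the Urysohn space and A, B ⊂ 𝕌 finite subsets. For every isometry p of 𝕌 fixing A ∩ B pointwise and every finite set C ⊆ 𝕌, there exists q in the subgroup generated by Iso_A(𝕌) and Iso_B(𝕌) (isometries fixing A, resp. B, pointwise) such that p(x) = q(x) for all x ∈ C. -/
/- Auxiliary machinery for Melleray's exact theorem. -/

open Finset

section melAux

variable {U : Type*} [MetricSpace U]

/-- The abstract pseudo-distance on `↥S ⊕ ↥C` given by a Katetov family `w`. -/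
def melAux.sumDist (S C : Finset U) (w : U → U → ℝ) : (↥S ⊕ ↥C) → (↥S ⊕ ↥C) → ℝ
  | .inl x, .inl y => dist (x : U) (y : U)
  | .inl x, .inr c => w (c : U) (x : U)
  | .inr c, .inl x => w (c : U) (x : U)
  | .inr c, .inr c' => dist (c : U) (c' : U)

theorem melAux.realize_family
    (huniv : ∀ (X : Type) (_ : MetricSpace X) (_ : Finite X), ∃ f : X → U, Isometry f)
    (hhomog : ∀ (s : Finset U) (f : U → U),
      (∀ x ∈ s, ∀ y ∈ s, dist (f x) (f y) = dist x y) →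
      ∃ g : U ≃ᵢ U, ∀ x ∈ s, g x = f x)
    (S C : Finset U) (w : U → U → ℝ)
    (h1 : ∀ c ∈ C, ∀ x ∈ S, ∀ y ∈ S, w c x ≤ w c y + dist x y)
    (h2 : ∀ c ∈ C, ∀ x ∈ S, ∀ y ∈ S, dist x y ≤ w c x + w c y)
    (h3 : ∀ c ∈ C, ∀ c' ∈ C, ∀ x ∈ S, w c x ≤ w c' x + dist c c')
    (h4 : ∀ c ∈ C, ∀ c' ∈ C, ∀ x ∈ S, dist c c' ≤ w c x + w c' x) :
    ∃ y : U → U, (∀ c ∈ C, ∀ s ∈ S, dist (y c) s = w c s) ∧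
      (∀ c ∈ C, ∀ c' ∈ C, dist (y c) (y c') = dist c c') := by
  classical
  set D := melAux.sumDist S C w with hD
  have hDsymm : ∀ z z', D z z' = D z' z := by
    rintro (x | c) (y | c') <;> simp [hD, melAux.sumDist, dist_comm]
  have hDself : ∀ z, D z z = 0 := by
    rintro (x | c) <;> simp [hD, melAux.sumDist]
  have hDtri : ∀ z₁ z₂ z₃, D z₁ z₃ ≤ D z₁ z₂ + D z₂ z₃ := by
    rintro (x | c) (y | c') (z | c'')
    · exact dist_triangle _ _ _
    · -- inl x, inl y, inr c'' : w c'' x ≤ dist x y + w c'' y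
      simpa [hD, melAux.sumDist, dist_comm, add_comm] using
        h1 _ c''.2 _ x.2 _ y.2
    · -- inl x, inr c', inl z : dist x z ≤ w c' x + w c' z
      simpa [hD, melAux.sumDist] using h2 _ c'.2 _ x.2 _ z.2
    · -- inl x, inr c', inr c'' : w c'' x ≤ w c' x + dist c' c''
      simpa [hD, melAux.sumDist, dist_comm] using h3 _ c''.2 _ c'.2 _ x.2
    · -- inr c, inl y, inl z : w c z ≤ w c y + dist y z
      simpa [hD, melAux.sumDist, dist_comm] using h1 _ c.2 _ z.2 _ y.2
    · -- inr c, inl y, inr c'' : dist c c'' ≤ w c y + w c'' y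
      simpa [hD, melAux.sumDist] using h4 _ c.2 _ c''.2 _ y.2
    · -- inr c, inr c', inl z : w c z ≤ dist c c' + w c' z
      simpa [hD, melAux.sumDist, add_comm] using h3 _ c.2 _ c'.2 _ z.2
    · exact dist_triangle _ _ _
  have hDnonneg : ∀ z z', 0 ≤ D z z' := by
    intro z z'
    have := hDtri z z' z
    rw [hDself z, hDsymm z' z] at this
    linarith
  -- embed into (Fin m → ℝ)
  let ι := (↥S ⊕ ↥C)
  let e : ι ≃ Fin (Fintype.card ι) := Fintype.equivFin ι
  let φ : ι → (Fin (Fintype.card ι) → ℝ) := fun z j => D z (e.symm j)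
  have key : ∀ z z', dist (φ z) (φ z') = D z z' := by
    intro z z'
    apply le_antisymm
    · refine (dist_pi_le_iff (hDnonneg z z')).2 fun j => ?_
      rw [Real.dist_eq, abs_le]
      constructor
      · have := hDtri z' z (e.symm j)
        simp only [φ]; linarith [hDsymm z' z]
      · have := hDtri z z' (e.symm j)
        simp only [φ]; linarith
    · have h := dist_le_pi_dist (φ z) (φ z') (e z')
      have h1' : φ z (e z') = D z z' := by simp [φ]
      have h2' : φ z' (e z') = 0 := by simp [φ, hDself]
      rw [h1', h2', Real.dist_eq, sub_zero, abs_of_nonneg (hDnonneg z z')] at h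
      exact h
  obtain ⟨f, hf⟩ := huniv (Set.range φ) inferInstance (Set.finite_range φ).to_subtype
  let ψ : ι → U := fun z => f ⟨φ z, Set.mem_range_self z⟩
  have hψ : ∀ z z', dist (ψ z) (ψ z') = D z z' := by
    intro z z'
    rw [show dist (ψ z) (ψ z') = dist (φ z) (φ z') from hf.dist_eq _ _]
    exact key z z'
  -- partial isometry from the copy of S back to S
  let t : Finset U := S.attach.image fun s => ψ (.inl s)
  let F : U → U := fun z => if h : ∃ s : ↥S, ψ (.inl s) = z then (h.choose : U) else z
  have hFval : ∀ s : ↥S, F (ψ (.inl s)) = (s : U) := by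
    intro s
    have hex : ∃ s' : ↥S, ψ (.inl s') = ψ (.inl s) := ⟨s, rfl⟩
    have hch := hex.choose_spec
    have : dist (hex.choose : U) (s : U) = 0 := by
      have := hψ (.inl hex.choose) (.inl s)
      rw [hch] at this
      rw [dist_self] at this
      simpa [hD, melAux.sumDist] using this.symm
    have heq : (hex.choose : U) = (s : U) := by
      rwa [dist_eq_zero] at this
    simp only [F, dif_pos hex, heq]
  have hFiso : ∀ x ∈ t, ∀ y ∈ t, dist (F x) (F y) = dist x y := by
    intro x hx y hy
    simp only [t, mem_image, mem_attach, true_and] at hx hy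
    obtain ⟨s₁, rfl⟩ := hx
    obtain ⟨s₂, rfl⟩ := hy
    rw [hFval s₁, hFval s₂, hψ]
    simp [hD, melAux.sumDist]
  obtain ⟨g, hg⟩ := hhomog t F hFiso
  have hgS : ∀ s : ↥S, g (ψ (.inl s)) = (s : U) := by
    intro s
    rw [hg _ (by simp only [t, mem_image]; exact ⟨s, mem_attach _ _, rfl⟩), hFval]
  refine ⟨fun c => if hc : c ∈ C then g (ψ (.inr ⟨c, hc⟩)) else c, ?_, ?_⟩
  · intro c hc s hs
    simp only [dif_pos hc]
    conv_lhs => rw [show (s : U) = g (ψ (.inl ⟨s, hs⟩)) from (hgS ⟨s, hs⟩).symm]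
    rw [g.dist_eq, hψ]
    simp [hD, melAux.sumDist]
  · intro c hc c' hc'
    simp only [dif_pos hc, dif_pos hc']
    rw [g.dist_eq, hψ]
    simp [hD, melAux.sumDist]


theorem melAux.step_iso
    (hhomog : ∀ (s : Finset U) (f : U → U),
      (∀ x ∈ s, ∀ y ∈ s, dist (f x) (f y) = dist x y) →
      ∃ g : U ≃ᵢ U, ∀ x ∈ s, g x = f x)
    (E C : Finset U) (w w' : U → U → ℝ) (y y' : U → U)
    (hyE : ∀ c ∈ C, ∀ s ∈ E, dist (y c) s = w c s)
    (hy'E : ∀ c ∈ C, ∀ s ∈ E, dist (y' c) s = w' c s)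
    (hyc : ∀ c ∈ C, ∀ c' ∈ C, dist (y c) (y c') = dist c c')
    (hy'c : ∀ c ∈ C, ∀ c' ∈ C, dist (y' c) (y' c') = dist c c')
    (heq : ∀ c ∈ C, ∀ s ∈ E, w c s = w' c s) :
    ∃ g : U ≃ᵢ U, (∀ x ∈ E, g x = x) ∧ ∀ c ∈ C, g (y c) = y' c := by
  classical
  -- if y c lands in E, then y' c = y c
  have k1 : ∀ c ∈ C, y c ∈ E → y' c = y c := by
    intro c hc hmem
    have h0 : dist (y c) (y c) = w c (y c) := hyE c hc _ hmem
    have h0' : dist (y' c) (y c) = w' c (y c) := hy'E c hc _ hmem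
    rw [dist_self] at h0
    rw [← heq c hc _ hmem, ← h0] at h0'
    rwa [dist_eq_zero] at h0'
  let F : U → U := fun z =>
    if z ∈ E then z else if h : ∃ c, c ∈ C ∧ y c = z then y' h.choose else z
  have k2 : ∀ c ∈ C, F (y c) = y' c := by
    intro c hc
    by_cases hmem : y c ∈ E
    · simp only [F, if_pos hmem]; exact (k1 c hc hmem).symm
    · have hex : ∃ c', c' ∈ C ∧ y c' = y c := ⟨c, hc, rfl⟩
      simp only [F, if_neg hmem, dif_pos hex]
      obtain ⟨hc', heq'⟩ := hex.choose_spec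
      have : dist hex.choose c = 0 := by
        rw [← hyc _ hc' _ hc, heq', dist_self]
      rw [dist_eq_zero] at this
      rw [this]
  have k3 : ∀ s ∈ E, F s = s := fun s hs => by simp only [F, if_pos hs]
  have hdesc : ∀ z ∈ E ∪ C.image y, (z ∈ E ∧ F z = z) ∨ ∃ c ∈ C, z = y c ∧ F z = y' c := by
    intro z hz
    rcases mem_union.1 hz with h | h
    · exact Or.inl ⟨h, k3 z h⟩
    · obtain ⟨c, hc, rfl⟩ := mem_image.1 h
      exact Or.inr ⟨c, hc, rfl, k2 c hc⟩
  have hFiso : ∀ x ∈ E ∪ C.image y, ∀ z ∈ E ∪ C.image y, dist (F x) (F z) = dist x z := by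
    intro x hx z hz
    rcases hdesc x hx with ⟨hxE, hFx⟩ | ⟨c, hc, rfl, hFx⟩ <;>
      rcases hdesc z hz with ⟨hzE, hFz⟩ | ⟨c', hc', rfl, hFz⟩
    · rw [hFx, hFz]
    · rw [hFx, hFz, dist_comm x (y' c'), dist_comm x (y c'),
        hy'E c' hc' x hxE, hyE c' hc' x hxE, heq c' hc' x hxE]
    · rw [hFx, hFz, hy'E c hc z hzE, hyE c hc z hzE, heq c hc z hzE]
    · rw [hFx, hFz, hy'c c hc c' hc', hyc c hc c' hc']
  obtain ⟨g, hg⟩ := hhomog _ F hFiso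
  refine ⟨g, fun x hx => ?_, fun c hc => ?_⟩
  · rw [hg x (mem_union.2 (Or.inl hx))]; exact k3 x hx
  · rw [hg _ (mem_union.2 (Or.inr (mem_image_of_mem y hc)))]; exact k2 c hc


def melAux.IsFam {U : Type*} [MetricSpace U] (C S : Finset U) (w : U → U → ℝ) : Prop :=
  (∀ c ∈ C, ∀ x ∈ S, ∀ y ∈ S, w c x ≤ w c y + dist x y) ∧
  (∀ c ∈ C, ∀ x ∈ S, ∀ y ∈ S, dist x y ≤ w c x + w c y) ∧
  (∀ c ∈ C, ∀ c' ∈ C, ∀ x ∈ S, w c x ≤ w c' x + dist c c') ∧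
  (∀ c ∈ C, ∀ c' ∈ C, ∀ x ∈ S, dist c c' ≤ w c x + w c' x)

variable [DecidableEq U]

theorem melAux.chain
    (huniv : ∀ (X : Type) (_ : MetricSpace X) (_ : Finite X), ∃ f : X → U, Isometry f)
    (hhomog : ∀ (s : Finset U) (f : U → U),
      (∀ x ∈ s, ∀ y ∈ s, dist (f x) (f y) = dist x y) →
      ∃ g : U ≃ᵢ U, ∀ x ∈ s, g x = f x)
    (A B C S : Finset U) (hAS : A ⊆ S) (hBS : B ⊆ S) :
    ∀ (n : ℕ) (W : ℕ → U → U → ℝ),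
    (∀ i ≤ n, melAux.IsFam C S (W i)) →
    (∀ i < n, (∀ c ∈ C, ∀ s ∈ A, W i c s = W (i+1) c s) ∨
      (∀ c ∈ C, ∀ s ∈ B, W i c s = W (i+1) c s)) →
    ∀ (y0 yn : U → U),
    ((∀ c ∈ C, ∀ s ∈ S, dist (y0 c) s = W 0 c s) ∧
      (∀ c ∈ C, ∀ c' ∈ C, dist (y0 c) (y0 c') = dist c c')) →
    ((∀ c ∈ C, ∀ s ∈ S, dist (yn c) s = W n c s) ∧
      (∀ c ∈ C, ∀ c' ∈ C, dist (yn c) (yn c') = dist c c')) →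
    ∃ q ∈ Subgroup.closure
        ({g : U ≃ᵢ U | ∀ x ∈ A, g x = x} ∪ {g : U ≃ᵢ U | ∀ x ∈ B, g x = x}),
      ∀ c ∈ C, q (y0 c) = yn c := by
  intro n
  induction n with
  | zero =>
    intro W _ _ y0 yn hy0 hyn
    obtain ⟨g, hgB, hgc⟩ := melAux.step_iso hhomog B C (W 0) (W 0) y0 yn
      (fun c hc s hs => hy0.1 c hc s (hBS hs))
      (fun c hc s hs => hyn.1 c hc s (hBS hs))
      hy0.2 hyn.2 (fun _ _ _ _ => rfl)
    exact ⟨g, Subgroup.subset_closure (Or.inr hgB), hgc⟩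
  | succ n ih =>
    intro W hOK hstep y0 yn hy0 hyn
    obtain ⟨h1, h2, h3, h4⟩ := hOK n (Nat.le_succ n)
    obtain ⟨ym, hymS, hymc⟩ := melAux.realize_family huniv hhomog S C (W n) h1 h2 h3 h4
    obtain ⟨q', hq'mem, hq'c⟩ := ih W (fun i hi => hOK i (hi.trans (Nat.le_succ n)))
      (fun i hi => hstep i (hi.trans (Nat.lt_succ_self n))) y0 ym hy0 ⟨hymS, hymc⟩
    rcases hstep n (Nat.lt_succ_self n) with hA | hB
    · obtain ⟨g, hgE, hgc⟩ := melAux.step_iso hhomog A C (W n) (W (n+1)) ym yn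
        (fun c hc s hs => hymS c hc s (hAS hs))
        (fun c hc s hs => hyn.1 c hc s (hAS hs))
        hymc hyn.2 hA
      refine ⟨g * q', Subgroup.mul_mem _ (Subgroup.subset_closure (Or.inl hgE)) hq'mem,
        fun c hc => ?_⟩
      show g (q' (y0 c)) = yn c
      rw [hq'c c hc]; exact hgc c hc
    · obtain ⟨g, hgE, hgc⟩ := melAux.step_iso hhomog B C (W n) (W (n+1)) ym yn
        (fun c hc s hs => hymS c hc s (hBS hs))
        (fun c hc s hs => hyn.1 c hc s (hBS hs))
        hymc hyn.2 hB
      refine ⟨g * q', Subgroup.mul_mem _ (Subgroup.subset_closure (Or.inr hgE)) hq'mem,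
        fun c hc => ?_⟩
      show g (q' (y0 c)) = yn c
      rw [hq'c c hc]; exact hgc c hc


theorem melAux.ascend (A B C : Finset U) (hAne : A.Nonempty) (hBne : B.Nonempty)
    (δ R : ℝ) (hδpos : 0 < δ)
    (hδle : ∀ a ∈ A \ B, ∀ b ∈ B \ A, δ ≤ dist a b)
    (TOP : U → U → ℝ)
    (hTOPleR : ∀ c ∈ C, ∀ x ∈ A ∪ B, TOP c x ≤ R)
    (hTOPlipx : ∀ c ∈ C, ∀ x ∈ A ∪ B, ∀ y ∈ A ∪ B, TOP c x ≤ TOP c y + dist x y)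
    (hTOPlipc : ∀ c ∈ C, ∀ c' ∈ C, ∀ x ∈ A ∪ B, TOP c x ≤ TOP c' x + dist c c')
    (K : ℕ) (hK : R ≤ K * δ)
    (w₀ : U → U → ℝ)
    (hfam : melAux.IsFam C (A ∪ B) w₀)
    (hw₀TOP : ∀ c ∈ C, ∀ x ∈ A ∪ B, w₀ c x ≤ TOP c x)
    (hpin : ∀ c ∈ C, ∀ y ∈ A ∩ B, w₀ c y = TOP c y) :
    ∃ W : ℕ → U → U → ℝ, W 0 = w₀ ∧ (∀ i, melAux.IsFam C (A ∪ B) (W i)) ∧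
      (∀ i, (∀ c ∈ C, ∀ s ∈ A, W i c s = W (i+1) c s) ∨
        (∀ c ∈ C, ∀ s ∈ B, W i c s = W (i+1) c s)) ∧
      (∀ c ∈ C, ∀ x ∈ A ∪ B, W (2*K) c x = TOP c x) := by
  classical
  have hAS : A ⊆ A ∪ B := subset_union_left
  have hBS : B ⊆ A ∪ B := subset_union_right
  set S := A ∪ B with hS
  -- the one-sided maximal extension step
  set stepE : Finset U → (U → U → ℝ) → (U → U → ℝ) := fun E w c x =>
    if hE : E.Nonempty then
      (if x ∈ E then w c x else min (TOP c x) (E.inf' hE fun b => w c b + dist b x))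
    else w c x with hstepE
  -- invariant
  set Inv : (U → U → ℝ) → Prop := fun w => melAux.IsFam C S w ∧
    (∀ c ∈ C, ∀ x ∈ S, w c x ≤ TOP c x) ∧
    (∀ c ∈ C, ∀ y ∈ A ∩ B, w c y = TOP c y) with hInv
  -- key step-preservation lemma
  have key : ∀ (E : Finset U) (hE : E.Nonempty), E ⊆ S → A ∩ B ⊆ E → ∀ w, Inv w →
      Inv (stepE E w) ∧ (∀ c ∈ C, ∀ x ∈ S, w c x ≤ stepE E w c x) ∧
      (∀ c ∈ C, ∀ x ∈ E, stepE E w c x = w c x) := by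
    intro E hE hES hABE w hw
    obtain ⟨⟨f1, f2, f3, f4⟩, hTb, hpw⟩ := hw
    have hsv : ∀ c x, stepE E w c x =
        if x ∈ E then w c x else min (TOP c x) (E.inf' hE fun b => w c b + dist b x) := by
      intro c x; simp only [hstepE, dif_pos hE]
    have hunch : ∀ c ∈ C, ∀ x ∈ E, stepE E w c x = w c x := by
      intro c _ x hxE; rw [hsv, if_pos hxE]
    have hmono : ∀ c ∈ C, ∀ x ∈ S, w c x ≤ stepE E w c x := by
      intro c hc x hx
      rw [hsv]
      by_cases hxE : x ∈ E
      · rw [if_pos hxE]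
      · rw [if_neg hxE]
        refine le_min (hTb c hc x hx) (Finset.le_inf' hE _ fun b hb => ?_)
        have := f1 c hc x hx b (hES hb)
        rwa [dist_comm x b] at this
    have hub : ∀ c ∈ C, ∀ x ∈ S, stepE E w c x ≤ TOP c x := by
      intro c hc x hx
      rw [hsv]
      by_cases hxE : x ∈ E
      · rw [if_pos hxE]; exact hTb c hc x hx
      · rw [if_neg hxE]; exact min_le_left _ _
    refine ⟨⟨⟨?_, ?_, ?_, ?_⟩, hub, ?_⟩, hmono, hunch⟩
    · -- Lipschitz in the space variable
      intro c hc x hx y hy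
      rw [hsv, hsv]
      by_cases hxE : x ∈ E <;> by_cases hyE : y ∈ E
      · rw [if_pos hxE, if_pos hyE]; exact f1 c hc x hx y hy
      · rw [if_pos hxE, if_neg hyE]
        have h1 : w c x - dist x y ≤ TOP c y := by
          have h := hTb c hc x hx
          have h' := hTOPlipx c hc x hx y hy
          linarith
        have h2 : w c x - dist x y ≤ E.inf' hE fun b => w c b + dist b y := by
          refine Finset.le_inf' hE _ fun b hb => ?_
          have hf := f1 c hc x hx b (hES hb)
          have ht : dist x b ≤ dist x y + dist b y := by
            rw [dist_comm b y]; exact dist_triangle x y b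
          linarith
        have := le_min h1 h2
        linarith
      · rw [if_neg hxE, if_pos hyE]
        have h := Finset.inf'_le (fun b => w c b + dist b x) hyE
        rw [dist_comm y x] at h
        exact le_trans (min_le_right _ _) h
      · rw [if_neg hxE, if_neg hyE]
        have h1 : min (TOP c x) (E.inf' hE fun b => w c b + dist b x) - dist x y ≤ TOP c y := by
          have h := hTOPlipx c hc x hx y hy
          have := min_le_left (TOP c x) (E.inf' hE fun b => w c b + dist b x)
          linarith
        have h2 : min (TOP c x) (E.inf' hE fun b => w c b + dist b x) - dist x y ≤
            E.inf' hE fun b => w c b + dist b y := by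
          refine Finset.le_inf' hE _ fun b hb => ?_
          have h := Finset.inf'_le (fun b => w c b + dist b x) hb
          have ht : dist b x ≤ dist b y + dist x y := by
            rw [dist_comm x y]; exact dist_triangle b y x
          have := min_le_right (TOP c x) (E.inf' hE fun b => w c b + dist b x)
          linarith
        have := le_min h1 h2
        linarith
    · -- lower bound in the space variables
      intro c hc x hx y hy
      have := f2 c hc x hx y hy
      have := hmono c hc x hx
      have := hmono c hc y hy
      linarith
    · -- Lipschitz in c
      intro c hc c' hc' x hx
      rw [hsv, hsv]
      by_cases hxE : x ∈ E
      · rw [if_pos hxE, if_pos hxE]; exact f3 c hc c' hc' x hx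
      · rw [if_neg hxE, if_neg hxE]
        have h1 : min (TOP c x) (E.inf' hE fun b => w c b + dist b x) - dist c c' ≤
            TOP c' x := by
          have h := hTOPlipc c hc c' hc' x hx
          have := min_le_left (TOP c x) (E.inf' hE fun b => w c b + dist b x)
          linarith
        have h2 : min (TOP c x) (E.inf' hE fun b => w c b + dist b x) - dist c c' ≤
            E.inf' hE fun b => w c' b + dist b x := by
          refine Finset.le_inf' hE _ fun b hb => ?_
          have h := Finset.inf'_le (fun b => w c b + dist b x) hb
          have hf := f3 c hc c' hc' b (hES hb)
          have := min_le_right (TOP c x) (E.inf' hE fun b => w c b + dist b x)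
          linarith
        have := le_min h1 h2
        linarith
    · -- lower bound in c
      intro c hc c' hc' x hx
      have := f4 c hc c' hc' x hx
      have := hmono c hc x hx
      have := hmono c' hc' x hx
      linarith
    · -- pinned values
      intro c hc y hy
      rw [hunch c hc y (hABE hy)]
      exact hpw c hc y hy
  -- progress: a double step raises the floor by δ
  have progB : ∀ w t, Inv w → (∀ c ∈ C, ∀ x ∈ S, min (TOP c x) t ≤ w c x) →
      ∀ c ∈ C, ∀ x ∈ S, x ∉ B → min (TOP c x) (t + δ) ≤ stepE B w c x := by
    intro w t hw hfloor c hc x hx hxB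
    have hsv : stepE B w c x =
        if x ∈ B then w c x else min (TOP c x) (B.inf' hBne fun b => w c b + dist b x) := by
      simp only [hstepE, dif_pos hBne]
    rw [hsv, if_neg hxB]
    refine le_min (min_le_left _ _) (Finset.le_inf' hBne _ fun b hb => ?_)
    by_cases hbA : b ∈ A
    · -- b ∈ A ∩ B : value is pinned at TOP
      have hpinb : w c b = TOP c b := hw.2.2 c hc b (mem_inter.2 ⟨hbA, hb⟩)
      have h := hTOPlipx c hc x hx b (hBS hb)
      rw [dist_comm x b] at h
      have := min_le_left (TOP c x) (t + δ)
      linarith [dist_nonneg (x := b) (y := x)]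
    · -- b ∈ B \ A, and x ∈ A \ B, so dist x b ≥ δ
      have hxA : x ∈ A := by
        rcases mem_union.1 hx with h | h
        · exact h
        · exact absurd h hxB
      have hdb : δ ≤ dist x b := hδle x (mem_sdiff.2 ⟨hxA, hxB⟩) b (mem_sdiff.2 ⟨hb, hbA⟩)
      rw [dist_comm x b] at hdb
      have hfb := hfloor c hc b (hBS hb)
      rcases le_total (TOP c b) t with hcase | hcase
      · -- min = TOP c b
        rw [min_eq_left hcase] at hfb
        have h := hTOPlipx c hc x hx b (hBS hb)
        rw [dist_comm x b] at h
        have := min_le_left (TOP c x) (t + δ)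
        linarith
      · rw [min_eq_right hcase] at hfb
        have := min_le_right (TOP c x) (t + δ)
        linarith
  have progA : ∀ w' t, Inv w' →
      (∀ c ∈ C, ∀ x ∈ S, x ∈ B → min (TOP c x) t ≤ w' c x) →
      (∀ c ∈ C, ∀ x ∈ S, x ∉ B → min (TOP c x) (t + δ) ≤ w' c x) →
      ∀ c ∈ C, ∀ x ∈ S, min (TOP c x) (t + δ) ≤ stepE A w' c x := by
    intro w' t hw' hfB hfA c hc x hx
    have hsv : stepE A w' c x =
        if x ∈ A then w' c x else min (TOP c x) (A.inf' hAne fun a => w' c a + dist a x) := by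
      simp only [hstepE, dif_pos hAne]
    rw [hsv]
    by_cases hxA : x ∈ A
    · rw [if_pos hxA]
      by_cases hxB : x ∈ B
      · -- pinned at TOP
        have := hw'.2.2 c hc x (mem_inter.2 ⟨hxA, hxB⟩)
        rw [this]
        exact min_le_left _ _
      · exact hfA c hc x hx hxB
    · rw [if_neg hxA]
      refine le_min (min_le_left _ _) (Finset.le_inf' hAne _ fun a ha => ?_)
      by_cases haB : a ∈ B
      · have hpina : w' c a = TOP c a := hw'.2.2 c hc a (mem_inter.2 ⟨ha, haB⟩)
        have h := hTOPlipx c hc x hx a (hAS ha)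
        rw [dist_comm x a] at h
        have := min_le_left (TOP c x) (t + δ)
        linarith
      · have hfa := hfA c hc a (hAS ha) haB
        rcases le_total (TOP c a) (t + δ) with hcase | hcase
        · rw [min_eq_left hcase] at hfa
          have h := hTOPlipx c hc x hx a (hAS ha)
          rw [dist_comm x a] at h
          have := min_le_left (TOP c x) (t + δ)
          linarith
        · rw [min_eq_right hcase] at hfa
          have := min_le_right (TOP c x) (t + δ)
          linarith [dist_nonneg (x := a) (y := x)]
  -- the sequence
  set W : ℕ → U → U → ℝ :=
    fun n => Nat.rec w₀ (fun k wk => if Even k then stepE B wk else stepE A wk) n with hW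
  have hWsucc : ∀ i, W (i+1) = if Even i then stepE B (W i) else stepE A (W i) := fun i => rfl
  have hInv0 : Inv w₀ := ⟨hfam, hw₀TOP, hpin⟩
  have hInvAll : ∀ i, Inv (W i) := by
    intro i
    induction i with
    | zero => exact hInv0
    | succ i ihi =>
      rw [hWsucc]
      by_cases h : Even i
      · rw [if_pos h]
        exact (key B hBne hBS (inter_subset_right) _ ihi).1
      · rw [if_neg h]
        exact (key A hAne hAS (inter_subset_left) _ ihi).1
  have hfloor : ∀ k : ℕ, ∀ c ∈ C, ∀ x ∈ S, min (TOP c x) (k * δ) ≤ W (2*k) c x := by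
    intro k
    induction k with
    | zero =>
      intro c hc x hx
      have h0 : ∀ c ∈ C, ∀ x ∈ S, 0 ≤ w₀ c x := by
        intro c hc x hx
        have := hfam.2.2.2 c hc c hc x hx
        rw [dist_self] at this; linarith
      have h00 : (0:ℝ) ≤ W 0 c x := h0 c hc x hx
      simpa using le_trans (min_le_right (TOP c x) 0) h00
    | succ k ihk =>
      have h2k1 : W (2*k+1) = stepE B (W (2*k)) := by
        rw [hWsucc, if_pos (even_two_mul k)]
      have h2k2 : W (2*(k+1)) = stepE A (W (2*k+1)) := by
        have : 2*(k+1) = (2*k+1)+1 := by ring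
        rw [this, hWsucc, if_neg (by simp [Nat.even_add_one, Nat.not_even_iff_odd,
          Nat.not_even_iff_odd] : ¬ Even (2*k+1))]
      intro c hc x hx
      rw [h2k2]
      have hInv2k := hInvAll (2*k)
      have hInv2k1 : Inv (W (2*k+1)) := hInvAll (2*k+1)
      have hBnew : ∀ c ∈ C, ∀ x ∈ S, x ∉ B →
          min (TOP c x) (k * δ + δ) ≤ W (2*k+1) c x := by
        intro c hc x hx hxB
        rw [h2k1]
        exact progB (W (2*k)) (k * δ) hInv2k ihk c hc x hx hxB
      have hBold : ∀ c ∈ C, ∀ x ∈ S, x ∈ B →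
          min (TOP c x) (k * δ) ≤ W (2*k+1) c x := by
        intro c hc x hx hxB
        rw [h2k1]
        have := (key B hBne hBS (inter_subset_right) _ hInv2k).2.2 c hc x hxB
        rw [this]
        exact ihk c hc x hx
      have := progA (W (2*k+1)) (k * δ) hInv2k1 hBold hBnew c hc x hx
      have harith : (↑(k+1) : ℝ) * δ = ↑k * δ + δ := by push_cast; ring
      rw [harith]
      exact this
  refine ⟨W, rfl, fun i => (hInvAll i).1, ?_, ?_⟩
  · intro i
    rw [hWsucc]
    by_cases h : Even i
    · rw [if_pos h]
      exact Or.inr fun c hc s hs =>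
        ((key B hBne hBS (inter_subset_right) _ (hInvAll i)).2.2 c hc s hs).symm
    · rw [if_neg h]
      exact Or.inl fun c hc s hs =>
        ((key A hAne hAS (inter_subset_left) _ (hInvAll i)).2.2 c hc s hs).symm
  · intro c hc x hx
    refine le_antisymm ((hInvAll (2*K)).2.1 c hc x hx) ?_
    have hf := hfloor K c hc x hx
    have : min (TOP c x) (K * δ) = TOP c x :=
      min_eq_left (le_trans (hTOPleR c hc x hx) hK)
    rwa [this] at hf


end melAux




/-- Exact version of Melleray's theorem. `U` is the Urysohn space, characterized as a
complete separable metric space which is universal for finite metric spaces and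
ultrahomogeneous. For finite `A, B ⊆ U`, every isometry fixing `A ∩ B` pointwise agrees
on any prescribed finite set `C` with some element of the subgroup generated by the
pointwise stabilizers of `A` and of `B`. -/
theorem melleray_exact
    (U : Type*) [MetricSpace U] [CompleteSpace U] [TopologicalSpace.SeparableSpace U]
    -- universality for finite metric spaces
    (huniv : ∀ (X : Type) (_ : MetricSpace X) (_ : Finite X), ∃ f : X → U, Isometry f)
    -- ultrahomogeneity: every partial isometry between finite subsets extends
    (hhomog : ∀ (s : Finset U) (f : U → U),
      (∀ x ∈ s, ∀ y ∈ s, dist (f x) (f y) = dist x y) →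
      ∃ g : U ≃ᵢ U, ∀ x ∈ s, g x = f x)
    (A B C : Finset U) (p : U ≃ᵢ U)
    (hp : ∀ x ∈ (A : Set U) ∩ (B : Set U), p x = x) :
    ∃ q ∈ Subgroup.closure
        ({g : U ≃ᵢ U | ∀ x ∈ A, g x = x} ∪ {g : U ≃ᵢ U | ∀ x ∈ B, g x = x}),
      ∀ x ∈ C, p x = q x := by
  classical
  rcases C.eq_empty_or_nonempty with rfl | hCne
  · exact ⟨1, Subgroup.one_mem _, by simp⟩
  by_cases hABs : A ⊆ B
  · exact ⟨p, Subgroup.subset_closure (Or.inl fun x hx =>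
      hp x ⟨Finset.mem_coe.2 hx, Finset.mem_coe.2 (hABs hx)⟩), fun x _ => rfl⟩
  by_cases hBAs : B ⊆ A
  · exact ⟨p, Subgroup.subset_closure (Or.inr fun x hx =>
      hp x ⟨Finset.mem_coe.2 (hBAs hx), Finset.mem_coe.2 hx⟩), fun x _ => rfl⟩
  have hABne : (A \ B).Nonempty := by rwa [Finset.sdiff_nonempty]
  have hBAne : (B \ A).Nonempty := by rwa [Finset.sdiff_nonempty]
  have hAne : A.Nonempty := ⟨hABne.choose, (mem_sdiff.1 hABne.choose_spec).1⟩
  have hBne : B.Nonempty := ⟨hBAne.choose, (mem_sdiff.1 hBAne.choose_spec).1⟩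
  have hpfix : ∀ y ∈ A ∩ B, p y = y := fun y hy => by
    have h := mem_inter.1 hy
    exact hp y ⟨Finset.mem_coe.2 h.1, Finset.mem_coe.2 h.2⟩
  set S : Finset U := A ∪ B with hSdef
  have hAS : A ⊆ S := subset_union_left
  have hBS : B ⊆ S := subset_union_right
  have hSne : S.Nonempty := hAne.mono hAS
  -- δ
  have hPne : ((A \ B) ×ˢ (B \ A)).Nonempty := hABne.product hBAne
  set δ : ℝ := ((A \ B) ×ˢ (B \ A)).inf' hPne fun z => dist z.1 z.2 with hδdef
  have hδpos : 0 < δ := by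
    rw [hδdef, Finset.lt_inf'_iff]
    rintro ⟨a, b⟩ hab
    rw [Finset.mem_product] at hab
    refine dist_pos.2 fun h => ?_
    exact (mem_sdiff.1 hab.1).2 (h ▸ (mem_sdiff.1 hab.2).1)
  have hδle : ∀ a ∈ A \ B, ∀ b ∈ B \ A, δ ≤ dist a b := fun a ha b hb =>
    Finset.inf'_le _ (show (a, b) ∈ (A \ B) ×ˢ (B \ A) from Finset.mem_product.2 ⟨ha, hb⟩)
  -- R
  have hCS : (C ×ˢ S).Nonempty := hCne.product hSne
  set R : ℝ := max ((C ×ˢ S).sup' hCS fun z => dist z.1 z.2)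
      ((C ×ˢ S).sup' hCS fun z => dist (p z.1) z.2) with hRdef
  have hRc : ∀ c ∈ C, ∀ x ∈ S, dist c x ≤ R := fun c hc x hx =>
    le_trans (Finset.le_sup' (fun z : U × U => dist z.1 z.2)
      (show (c, x) ∈ C ×ˢ S from Finset.mem_product.2 ⟨hc, hx⟩)) (le_max_left _ _)
  have hRpc : ∀ c ∈ C, ∀ x ∈ S, dist (p c) x ≤ R := fun c hc x hx =>
    le_trans (Finset.le_sup' (fun z : U × U => dist (p z.1) z.2)
      (show (c, x) ∈ C ×ˢ S from Finset.mem_product.2 ⟨hc, hx⟩)) (le_max_right _ _)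
  -- K
  obtain ⟨K₀, hK₀⟩ := exists_nat_ge (R / δ)
  set K : ℕ := K₀ + 1 with hKdef
  have hK : R ≤ K * δ := by
    have h1 : R / δ ≤ (K : ℝ) := le_trans hK₀ (by exact_mod_cast Nat.le_succ K₀)
    calc R = R / δ * δ := by field_simp
    _ ≤ K * δ := by nlinarith
  -- TOP
  set TOP : U → U → ℝ := fun c x =>
    (insert R ((A ∩ B).image fun y => dist c y + dist y x)).min'
      (insert_nonempty _ _) with hTOPdef
  have hTOPleR : ∀ c x, TOP c x ≤ R := fun c x =>
    Finset.min'_le _ _ (mem_insert_self _ _)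
  have hTOPley : ∀ c x, ∀ y ∈ A ∩ B, TOP c x ≤ dist c y + dist y x := fun c x y hy =>
    Finset.min'_le _ _ (mem_insert_of_mem (mem_image_of_mem _ hy))
  have hTOPcases : ∀ c x, TOP c x = R ∨ ∃ y ∈ A ∩ B, TOP c x = dist c y + dist y x := by
    intro c x
    have h := Finset.min'_mem (insert R ((A ∩ B).image fun y => dist c y + dist y x))
      (insert_nonempty _ _)
    rcases mem_insert.1 h with h' | h'
    · exact Or.inl h'
    · obtain ⟨y, hy, hval⟩ := mem_image.1 h'
      exact Or.inr ⟨y, hy, hval.symm⟩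
  have hTOPlipx : ∀ c x y, TOP c x ≤ TOP c y + dist x y := by
    intro c x y
    rcases hTOPcases c y with h | ⟨z, hz, h⟩
    · rw [h]
      exact le_trans (hTOPleR c x) (le_add_of_nonneg_right dist_nonneg)
    · rw [h]
      have h1 := hTOPley c x z hz
      have h2 : dist z x ≤ dist z y + dist x y := by
        rw [dist_comm x y]; exact dist_triangle z y x
      linarith
  have hTOPlipc : ∀ c c' x, TOP c x ≤ TOP c' x + dist c c' := by
    intro c c' x
    rcases hTOPcases c' x with h | ⟨z, hz, h⟩
    · rw [h]
      exact le_trans (hTOPleR c x) (le_add_of_nonneg_right dist_nonneg)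
    · rw [h]
      have h1 := hTOPley c x z hz
      have h2 : dist c z ≤ dist c' z + dist c c' := by
        linarith [dist_triangle c c' z]
      linarith
  have hTOPpin : ∀ c ∈ C, ∀ y ∈ A ∩ B, TOP c y = dist c y := by
    intro c hc y hy
    refine le_antisymm ?_ ?_
    · have := hTOPley c y y hy
      simpa using this
    · refine Finset.le_min' _ _ _ fun z hz => ?_
      rcases mem_insert.1 hz with h' | h'
      · exact h' ▸ hRc c hc y (hAS (mem_inter.1 hy).1)
      · obtain ⟨y', _, hval⟩ := mem_image.1 h'
        rw [← hval]
        exact dist_triangle c y' y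
  -- base families
  set u₀ : U → U → ℝ := fun c x => dist c x with hu₀def
  set v₀ : U → U → ℝ := fun c x => dist (p c) x with hv₀def
  have hu₀fam : melAux.IsFam C S u₀ := by
    refine ⟨fun c _ x _ y _ => ?_, fun c _ x _ y _ => ?_, fun c _ c' _ x _ => ?_,
      fun c _ c' _ x _ => ?_⟩
    · show dist c x ≤ dist c y + dist x y
      linarith [dist_triangle c y x, dist_comm y x]
    · show dist x y ≤ dist c x + dist c y
      linarith [dist_triangle x c y, dist_comm x c]
    · show dist c x ≤ dist c' x + dist c c'
      linarith [dist_triangle c c' x]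
    · show dist c c' ≤ dist c x + dist c' x
      linarith [dist_triangle c x c', dist_comm x c']
  have hv₀fam : melAux.IsFam C S v₀ := by
    refine ⟨fun c _ x _ y _ => ?_, fun c _ x _ y _ => ?_, fun c _ c' _ x _ => ?_,
      fun c _ c' _ x _ => ?_⟩
    · show dist (p c) x ≤ dist (p c) y + dist x y
      linarith [dist_triangle (p c) y x, dist_comm y x]
    · show dist x y ≤ dist (p c) x + dist (p c) y
      linarith [dist_triangle x (p c) y, dist_comm x (p c)]
    · show dist (p c) x ≤ dist (p c') x + dist c c'
      linarith [dist_triangle (p c) (p c') x, p.dist_eq c c']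
    · show dist c c' ≤ dist (p c) x + dist (p c') x
      linarith [dist_triangle (p c) x (p c'), dist_comm x (p c'), p.dist_eq c c']
  have hpy : ∀ y ∈ A ∩ B, ∀ c, dist (p c) y = dist c y := by
    intro y hy c
    conv_lhs => rw [← hpfix y hy]
    exact p.dist_eq c y
  have hu₀TOP : ∀ c ∈ C, ∀ x ∈ S, u₀ c x ≤ TOP c x := by
    intro c hc x hx
    refine Finset.le_min' _ _ _ fun z hz => ?_
    rcases mem_insert.1 hz with h' | h'
    · exact h' ▸ hRc c hc x hx
    · obtain ⟨y', _, hval⟩ := mem_image.1 h'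
      rw [← hval]
      exact dist_triangle c y' x
  have hv₀TOP : ∀ c ∈ C, ∀ x ∈ S, v₀ c x ≤ TOP c x := by
    intro c hc x hx
    refine Finset.le_min' _ _ _ fun z hz => ?_
    rcases mem_insert.1 hz with h' | h'
    · exact h' ▸ hRpc c hc x hx
    · obtain ⟨y', hy', hval⟩ := mem_image.1 h'
      rw [← hval, ← hpy y' hy' c]
      exact dist_triangle (p c) y' x
  have hu₀pin : ∀ c ∈ C, ∀ y ∈ A ∩ B, u₀ c y = TOP c y := fun c hc y hy =>
    (hTOPpin c hc y hy).symm
  have hv₀pin : ∀ c ∈ C, ∀ y ∈ A ∩ B, v₀ c y = TOP c y := fun c hc y hy => by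
    rw [hTOPpin c hc y hy]; exact hpy y hy c
  -- the two ascending sequences
  obtain ⟨Wu, hWu0, hWuFam, hWuStep, hWuTop⟩ := melAux.ascend A B C hAne hBne δ R hδpos
    hδle TOP (fun c _ x _ => hTOPleR c x) (fun c _ x _ y _ => hTOPlipx c x y)
    (fun c _ c' _ x _ => hTOPlipc c c' x) K hK u₀ hu₀fam hu₀TOP hu₀pin
  obtain ⟨Wv, hWv0, hWvFam, hWvStep, hWvTop⟩ := melAux.ascend A B C hAne hBne δ R hδpos
    hδle TOP (fun c _ x _ => hTOPleR c x) (fun c _ x _ y _ => hTOPlipx c x y)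
    (fun c _ c' _ x _ => hTOPlipc c c' x) K hK v₀ hv₀fam hv₀TOP hv₀pin
  -- total chain of length 4K
  set N : ℕ := 4 * K with hNdef
  obtain ⟨Wt, hWtval⟩ : ∃ Wt : ℕ → U → U → ℝ,
      ∀ i, Wt i = if i ≤ 2 * K then Wu i else Wv (N - i) :=
    ⟨fun i => if i ≤ 2 * K then Wu i else Wv (N - i), fun i => rfl⟩
  have hWt0 : Wt 0 = u₀ := by
    rw [hWtval 0, if_pos (Nat.zero_le _)]; exact hWu0
  have hWtN : Wt N = v₀ := by
    rw [hWtval N, if_neg (by omega), Nat.sub_self]; exact hWv0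
  have hOK : ∀ i ≤ N, melAux.IsFam C S (Wt i) := by
    intro i _
    rw [hWtval i]
    by_cases h : i ≤ 2 * K
    · rw [if_pos h]; exact hWuFam i
    · rw [if_neg h]; exact hWvFam (N - i)
  have hstep : ∀ i < N, (∀ c ∈ C, ∀ s ∈ A, Wt i c s = Wt (i+1) c s) ∨
      (∀ c ∈ C, ∀ s ∈ B, Wt i c s = Wt (i+1) c s) := by
    intro i hiN
    by_cases h1 : i + 1 ≤ 2 * K
    · have h0 : i ≤ 2 * K := by omega
      rw [hWtval i, hWtval (i+1), if_pos h0, if_pos h1]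
      exact hWuStep i
    · by_cases h2 : i ≤ 2 * K
      · -- junction: i = 2K
        have hi : i = 2 * K := by omega
        have hsub : N - (i + 1) = 2 * K - 1 := by omega
        have hplus : (2 * K - 1) + 1 = 2 * K := by omega
        rw [hWtval i, hWtval (i+1), if_pos h2, if_neg h1, hsub, hi]
        rcases hWvStep (2 * K - 1) with hA | hB
        · refine Or.inl fun c hc s hs => ?_
          rw [hWuTop c hc s (hAS hs), ← hWvTop c hc s (hAS hs), ← hplus]
          exact (hA c hc s hs).symm
        · refine Or.inr fun c hc s hs => ?_
          rw [hWuTop c hc s (hBS hs), ← hWvTop c hc s (hBS hs), ← hplus]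
          exact (hB c hc s hs).symm
      · -- descending part
        have hsub : N - i = (N - (i + 1)) + 1 := by omega
        rw [hWtval i, hWtval (i+1), if_neg h2, if_neg h1, hsub]
        rcases hWvStep (N - (i + 1)) with hA | hB
        · exact Or.inl fun c hc s hs => (hA c hc s hs).symm
        · exact Or.inr fun c hc s hs => (hB c hc s hs).symm
  obtain ⟨q, hqmem, hq⟩ := melAux.chain huniv hhomog A B C S hAS hBS N Wt hOK hstep
    (fun c => c) (fun c => p c)
    ⟨fun c _ s _ => by rw [hWt0], fun c _ c' _ => rfl⟩
    ⟨fun c _ s _ => by rw [hWtN], fun c _ c' _ => p.dist_eq c c'⟩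
  exact ⟨q, hqmem, fun x hx => (hq x hx).symm⟩
end

section
/- For the rational Urysohn space ℚ𝕌 and finite subsets A, B ⊂ ℚ𝕌, the group of isometries fixing A ∩ B pointwise equals the closure of the subgroup generated by the isometries fixing A pointwise together with the isometries fixing B pointwise: Iso_{A∩B}(ℚ𝕌) = cl⟨Iso_A(ℚ𝕌), Iso_B(ℚ𝕌)⟩. -/
open Relation Finset

namespace RUS

variable {U : Type*} [MetricSpace U]

/-- Extend a partial isometry given by matching tuples to a global isometry. -/
lemma extend
    (hhomog : ∀ (s : Finset U) (f : U → U),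
      (∀ x ∈ s, ∀ y ∈ s, dist (f x) (f y) = dist x y) →
      ∃ g : U ≃ᵢ U, ∀ x ∈ s, g x = f x)
    {ι : Type*} [Fintype ι] (p q : ι → U)
    (hpq : ∀ i j, dist (p i) (p j) = dist (q i) (q j)) :
    ∃ g : U ≃ᵢ U, ∀ i, g (p i) = q i := by
  classical
  set f : U → U := fun u => if h : ∃ i, p i = u then q h.choose else u with hf
  have feq : ∀ i, f (p i) = q i := by
    intro i
    have h : ∃ i', p i' = p i := ⟨i, rfl⟩
    have hspec := h.choose_spec
    have hd : dist (q h.choose) (q i) = 0 := by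
      rw [← hpq, hspec, dist_self]
    simp only [hf, dif_pos h]
    exact dist_eq_zero.mp hd
  have hiso : ∀ a ∈ Finset.image p Finset.univ, ∀ b ∈ Finset.image p Finset.univ,
      dist (f a) (f b) = dist a b := by
    intro a ha b hb
    obtain ⟨i, -, rfl⟩ := Finset.mem_image.1 ha
    obtain ⟨j, -, rfl⟩ := Finset.mem_image.1 hb
    rw [feq, feq]
    exact (hpq i j).symm
  obtain ⟨g, hg⟩ := hhomog (Finset.image p Finset.univ) f hiso
  exact ⟨g, fun i => by
    rw [hg _ (Finset.mem_image_of_mem p (Finset.mem_univ i)), feq]⟩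

/-- Auxiliary two-sorted index type. -/
inductive Aux (m n : ℕ) : Type where
  | pt : Fin m → Aux m n
  | zz : Fin n → Aux m n

instance (m n : ℕ) : Finite (Aux m n) := by
  apply Finite.of_injective (fun a : Aux m n => match a with
    | .pt i => (Sum.inl i : Fin m ⊕ Fin n)
    | .zz j => Sum.inr j)
  intro a b h
  cases a <;> cases b <;> simp_all

/-- Realize a configuration over `s` by an actual tuple in `U`. -/
lemma realize
    (hrat : ∀ x y : U, ∃ r : ℚ, dist x y = (r : ℝ))
    (huniv : ∀ (X : Type) (_ : MetricSpace X) (_ : Finite X),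
      (∀ x y : X, ∃ r : ℚ, dist x y = (r : ℝ)) → ∃ f : X → U, Isometry f)
    (hhomog : ∀ (s : Finset U) (f : U → U),
      (∀ x ∈ s, ∀ y ∈ s, dist (f x) (f y) = dist x y) →
      ∃ g : U ≃ᵢ U, ∀ x ∈ s, g x = f x)
    {m n : ℕ} (s : Fin m → U) (x : Fin n → U) (f : Fin n → Fin m → ℝ)
    (hrf : ∀ j i, ∃ q : ℚ, f j i = (q : ℝ))
    (lip : ∀ j i i', f j i ≤ f j i' + dist (s i') (s i))
    (tri : ∀ j i i', dist (s i) (s i') ≤ f j i + f j i')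
    (lipD : ∀ j k i, f j i ≤ dist (x j) (x k) + f k i)
    (triD : ∀ j k i, dist (x j) (x k) ≤ f j i + f k i) :
    ∃ z : Fin n → U, (∀ j i, dist (z j) (s i) = f j i) ∧
      ∀ j k, dist (z j) (z k) = dist (x j) (x k) := by
  classical
  set dd : Aux m n → Aux m n → ℝ := fun a b =>
    match a, b with
    | .pt i, .pt i' => dist (s i) (s i')
    | .pt i, .zz j => f j i
    | .zz j, .pt i => f j i
    | .zz j, .zz k => dist (x j) (x k) with hdd
  have fnonneg : ∀ j i, 0 ≤ f j i := by
    intro j i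
    have := tri j i i
    simp at this
    linarith [this]
  letI P : PseudoMetricSpace (Aux m n) :=
    { dist := dd
      dist_self := by rintro (i | j) <;> simp [hdd]
      dist_comm := by rintro (i | j) (i' | k) <;> simp [hdd, dist_comm]
      dist_triangle := by
        rintro (i | j) (i' | j') (i'' | j'') <;> simp only [hdd]
        · exact dist_triangle _ _ _
        · have := lip j'' i i'
          have h2 : dist (s i) (s i') = dist (s i') (s i) := dist_comm _ _
          linarith
        · exact tri _ _ _
        · have := lipD j'' j' i
          have : dist (x j'') (x j') = dist (x j') (x j'') := dist_comm _ _
          calc f j'' i ≤ dist (x j'') (x j') + f j' i := lipD _ _ _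
            _ = f j' i + dist (x j') (x j'') := by rw [dist_comm]; ring
        · exact lip _ _ _
        · exact triD _ _ _
        · exact lipD _ _ _
        · exact dist_triangle _ _ _ }
  set Q := SeparationQuotient (Aux m n) with hQ
  haveI : Finite Q := Finite.of_surjective _ SeparationQuotient.surjective_mk
  have hQrat : ∀ a b : Q, ∃ r : ℚ, dist a b = (r : ℝ) := by
    intro a b
    obtain ⟨a', rfl⟩ := SeparationQuotient.surjective_mk a
    obtain ⟨b', rfl⟩ := SeparationQuotient.surjective_mk b
    rw [SeparationQuotient.dist_mk]
    rcases a' with i | j <;> rcases b' with i' | k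
    · exact hrat _ _
    · exact hrf _ _
    · exact hrf _ _
    · exact hrat _ _
  obtain ⟨φ, hφ⟩ := huniv Q inferInstance inferInstance hQrat
  set p : Fin m → U := fun i => φ (SeparationQuotient.mk (.pt i)) with hp
  have hps : ∀ i i', dist (p i) (p i') = dist (s i) (s i') := by
    intro i i'
    rw [hp]
    simp only
    rw [hφ.dist_eq, SeparationQuotient.dist_mk]
    rfl
  obtain ⟨σ, hσ⟩ := extend hhomog p s hps
  · refine ⟨fun j => σ (φ (SeparationQuotient.mk (.zz j))), ?_, ?_⟩
    · intro j i
      have h1 : dist (σ (φ (SeparationQuotient.mk (.zz j)))) (s i)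
          = dist (σ (φ (SeparationQuotient.mk (.zz j)))) (σ (p i)) := by rw [hσ]
      rw [h1, σ.dist_eq, hφ.dist_eq, SeparationQuotient.dist_mk]
      rfl
    · intro j k
      rw [σ.dist_eq, hφ.dist_eq, SeparationQuotient.dist_mk]
      rfl


/-- values in `(1/N)ℤ` -/
lemma Pmin {N : ℕ} {a b : ℝ} (ha : ∃ k : ℤ, a = (k : ℝ) / N) (hb : ∃ k : ℤ, b = (k : ℝ) / N) :
    ∃ k : ℤ, min a b = (k : ℝ) / N := by
  obtain ⟨k1, rfl⟩ := ha; obtain ⟨k2, rfl⟩ := hb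
  refine ⟨min k1 k2, ?_⟩
  rcases le_total k1 k2 with h | h
  · have hc : ((k1 : ℝ)) / N ≤ (k2 : ℝ) / N := by
      have : (k1 : ℝ) ≤ k2 := by exact_mod_cast h
      gcongr
    rw [min_eq_left hc, min_eq_left h]
  · have hc : ((k2 : ℝ)) / N ≤ (k1 : ℝ) / N := by
      have : (k2 : ℝ) ≤ k1 := by exact_mod_cast h
      gcongr
    rw [min_eq_right hc, min_eq_right h]

lemma Padd {N : ℕ} {a b : ℝ} (ha : ∃ k : ℤ, a = (k : ℝ) / N) (hb : ∃ k : ℤ, b = (k : ℝ) / N) :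
    ∃ k : ℤ, a + b = (k : ℝ) / N := by
  obtain ⟨k1, rfl⟩ := ha; obtain ⟨k2, rfl⟩ := hb
  exact ⟨k1 + k2, by push_cast; ring⟩

lemma Pgap {N : ℕ} (hN : 0 < N) {a b : ℝ} (ha : ∃ k : ℤ, a = (k : ℝ) / N)
    (hb : ∃ k : ℤ, b = (k : ℝ) / N) (hab : a < b) : a + 1 / N ≤ b := by
  obtain ⟨k1, rfl⟩ := ha; obtain ⟨k2, rfl⟩ := hb
  have hN' : (0 : ℝ) < N := by exact_mod_cast hN
  have h1 : (k1 : ℝ) < k2 := by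
    rw [div_lt_div_iff_of_pos_right hN'] at hab
    exact hab
  have h2 : k1 + 1 ≤ k2 := by exact_mod_cast h1
  have h3 : ((k1 : ℝ) + 1) ≤ k2 := by exact_mod_cast h2
  rw [← add_div]
  gcongr


section Core

variable {U : Type*} [MetricSpace U]
variable {m n : ℕ} (s : Fin m → U) (x : Fin n → U) (IA IB : Finset (Fin m)) (R : ℝ) (N : ℕ)

/-- The canonical maximal configuration. -/
noncomputable def econf (j : Fin n) (i : Fin m) : ℝ :=
  if h : (IA ∩ IB).Nonempty then
    (IA ∩ IB).inf' h (fun c => dist (x j) (s c) + dist (s c) (s i))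
  else R

/-- Push a configuration to its maximal allowed values off `I`, capped at `R`. -/
noncomputable def push (I : Finset (Fin m)) (hI : I.Nonempty) (f : Fin n → Fin m → ℝ) :
    Fin n → Fin m → ℝ :=
  fun j i => if i ∈ I then f j i
    else min R (I.inf' hI fun a => f j a + dist (s a) (s i))

/-- Valid configuration. -/
structure IsConf (f : Fin n → Fin m → ℝ) : Prop where
  lip : ∀ j i i', f j i ≤ f j i' + dist (s i') (s i)
  tri : ∀ j i i', dist (s i) (s i') ≤ f j i + f j i'
  lipD : ∀ j k i, f j i ≤ dist (x j) (x k) + f k i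
  triD : ∀ j k i, dist (x j) (x k) ≤ f j i + f k i

/-- Configuration with all invariants. -/
structure Good (f : Fin n → Fin m → ℝ) : Prop where
  conf : IsConf s x f
  cap : ∀ j i, f j i ≤ R
  le_e : ∀ j i, f j i ≤ econf s x IA IB R j i
  tC : ∀ j, ∀ c ∈ IA ∩ IB, f j c = dist (x j) (s c)
  pval : ∀ j i, ∃ k : ℤ, f j i = (k : ℝ) / N

lemma econf_le {c : Fin m} (hc : c ∈ IA ∩ IB) (j : Fin n) (i : Fin m) :
    econf s x IA IB R j i ≤ dist (x j) (s c) + dist (s c) (s i) := by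
  rw [econf, dif_pos ⟨c, hc⟩]
  exact Finset.inf'_le _ hc

lemma econf_cases (j : Fin n) (i : Fin m) :
    econf s x IA IB R j i = R ∨
      ∃ c ∈ IA ∩ IB, econf s x IA IB R j i = dist (x j) (s c) + dist (s c) (s i) := by
  rw [econf]
  split_ifs with h
  · obtain ⟨c, hc, hceq⟩ :=
      Finset.exists_mem_eq_inf' h (fun c => dist (x j) (s c) + dist (s c) (s i))
    exact Or.inr ⟨c, hc, hceq⟩
  · exact Or.inl rfl

lemma econf_le_R
    (hRt : ∀ (j : Fin n) (c i : Fin m), c ∈ IA ∩ IB →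
      dist (x j) (s c) + dist (s c) (s i) ≤ R)
    (j : Fin n) (i : Fin m) : econf s x IA IB R j i ≤ R := by
  rcases econf_cases s x IA IB R j i with h | ⟨c, hc, h⟩
  · rw [h]
  · rw [h]; exact hRt j c i hc

lemma econf_diag
    (hRt : ∀ (j : Fin n) (c i : Fin m), c ∈ IA ∩ IB →
      dist (x j) (s c) + dist (s c) (s i) ≤ R)
    {c : Fin m} (hc : c ∈ IA ∩ IB) (j : Fin n) :
    econf s x IA IB R j c = dist (x j) (s c) := by
  refine le_antisymm (by simpa using econf_le s x IA IB R hc j c) ?_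
  rcases econf_cases s x IA IB R j c with h | ⟨c', hc', h⟩
  · rw [h]
    have := hRt j c c hc
    simpa using this
  · rw [h]
    have h2 : dist (x j) (s c) ≤ dist (x j) (s c') + dist (s c') (s c) := dist_triangle _ _ _
    linarith

lemma push_mono (I : Finset (Fin m)) (hI : I.Nonempty) {f : Fin n → Fin m → ℝ}
    (hconf : IsConf s x f) (hcap : ∀ j i, f j i ≤ R) :
    ∀ j i, f j i ≤ push s R I hI f j i := by
  intro j i
  rw [push]
  split_ifs with hi
  · exact le_rfl
  · exact le_min (hcap j i) (Finset.le_inf' hI _ fun a ha => hconf.lip j i a)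

lemma push_good (I : Finset (Fin m)) (hI : I.Nonempty) (hsub : IA ∩ IB ⊆ I)
    {f : Fin n → Fin m → ℝ} (hf : Good s x IA IB R N f)
    (hRt : ∀ (j : Fin n) (c i : Fin m), c ∈ IA ∩ IB →
      dist (x j) (s c) + dist (s c) (s i) ≤ R)
    (PR : ∃ k : ℤ, R = (k : ℝ) / N)
    (Pd : ∀ a i : Fin m, ∃ k : ℤ, dist (s a) (s i) = (k : ℝ) / N) :
    Good s x IA IB R N (push s R I hI f) := by
  have hmono := push_mono s x R I hI hf.conf hf.cap
  constructor
  · constructor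
    · -- lip
      intro j i i'
      simp only [push]
      split_ifs with hi hi' hi'
      · exact hf.conf.lip j i i'
      · rcases le_total R (I.inf' hI fun a => f j a + dist (s a) (s i')) with h | h
        · rw [min_eq_left h]
          have := dist_nonneg (x := s i') (y := s i)
          have := hf.cap j i
          linarith
        · rw [min_eq_right h]
          obtain ⟨a, haI, ha⟩ :=
            Finset.exists_mem_eq_inf' hI (fun a => f j a + dist (s a) (s i'))
          rw [ha]
          have h1 := hf.conf.lip j i a
          have h2 := dist_triangle (s a) (s i') (s i)
          linarith
      · exact le_trans (min_le_right _ _) (Finset.inf'_le _ hi')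
      · rcases le_total R (I.inf' hI fun a => f j a + dist (s a) (s i')) with h | h
        · rw [min_eq_left h]
          have := dist_nonneg (x := s i') (y := s i)
          have := min_le_left R (I.inf' hI fun a => f j a + dist (s a) (s i))
          linarith
        · rw [min_eq_right h]
          obtain ⟨a, haI, ha⟩ :=
            Finset.exists_mem_eq_inf' hI (fun a => f j a + dist (s a) (s i'))
          rw [ha]
          have h1 : (min R (I.inf' hI fun a => f j a + dist (s a) (s i)))
              ≤ f j a + dist (s a) (s i) :=
            le_trans (min_le_right _ _) (Finset.inf'_le _ haI)
          have h2 := dist_triangle (s a) (s i') (s i)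
          linarith
    · -- tri
      intro j i i'
      have := hf.conf.tri j i i'
      have := hmono j i
      have := hmono j i'
      linarith
    · -- lipD
      intro j k i
      simp only [push]
      split_ifs with hi
      · exact hf.conf.lipD j k i
      · rcases le_total R (I.inf' hI fun a => f k a + dist (s a) (s i)) with h | h
        · rw [min_eq_left h]
          have := dist_nonneg (x := x j) (y := x k)
          have := min_le_left R (I.inf' hI fun a => f j a + dist (s a) (s i))
          linarith
        · rw [min_eq_right h]
          obtain ⟨a, haI, ha⟩ :=
            Finset.exists_mem_eq_inf' hI (fun a => f k a + dist (s a) (s i))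
          rw [ha]
          have h1 : (min R (I.inf' hI fun a => f j a + dist (s a) (s i)))
              ≤ f j a + dist (s a) (s i) :=
            le_trans (min_le_right _ _) (Finset.inf'_le _ haI)
          have h2 := hf.conf.lipD j k a
          linarith
    · -- triD
      intro j k i
      have := hf.conf.triD j k i
      have := hmono j i
      have := hmono k i
      linarith
  · -- cap
    intro j i
    simp only [push]
    split_ifs with hi
    · exact hf.cap j i
    · exact min_le_left _ _
  · -- le_e
    intro j i
    simp only [push]
    split_ifs with hi
    · exact hf.le_e j i
    · rcases econf_cases s x IA IB R j i with h | ⟨c, hc, h⟩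
      · rw [h]; exact min_le_left _ _
      · rw [h]
        refine le_trans (min_le_right _ _) (le_trans (Finset.inf'_le _ (hsub hc)) ?_)
        rw [hf.tC j c hc]
  · -- tC
    intro j c hc
    simp only [push]
    rw [if_pos (hsub hc)]
    exact hf.tC j c hc
  · -- pval
    intro j i
    simp only [push]
    split_ifs with hi
    · exact hf.pval j i
    · obtain ⟨a, haI, ha⟩ :=
        Finset.exists_mem_eq_inf' hI (fun a => f j a + dist (s a) (s i))
      rw [ha]
      exact Pmin PR (Padd (hf.pval j a) (Pd a i))

lemma fixed_eq (hs : Function.Injective s) (hIA : IA.Nonempty) (hIB : IB.Nonempty)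
    (hRt : ∀ (j : Fin n) (c i : Fin m), c ∈ IA ∩ IB →
      dist (x j) (s c) + dist (s c) (s i) ≤ R)
    {f : Fin n → Fin m → ℝ} (hf : Good s x IA IB R N f)
    (hfixA : push s R IA hIA f = f) (hfixB : push s R IB hIB f = f) :
    f = econf s x IA IB R := by
  classical
  suffices hsuf : ∀ j, (Finset.univ.filter fun i => f j i < econf s x IA IB R j i) = ∅ by
    funext j i
    refine le_antisymm (hf.le_e j i) (not_lt.1 fun hlt => ?_)
    have : i ∈ (Finset.univ.filter fun i => f j i < econf s x IA IB R j i) :=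
      Finset.mem_filter.2 ⟨Finset.mem_univ i, hlt⟩
    rw [hsuf j] at this
    exact absurd this (Finset.notMem_empty i)
  intro j
  by_contra hSd
  have hne : (Finset.univ.filter fun i => f j i < econf s x IA IB R j i).Nonempty :=
    Finset.nonempty_iff_ne_empty.2 hSd
  obtain ⟨i₀, hi₀mem, hi₀min⟩ := Finset.exists_min_image _ (f j) hne
  have hi₀ : f j i₀ < econf s x IA IB R j i₀ := (Finset.mem_filter.1 hi₀mem).2
  have hltR : f j i₀ < R := lt_of_lt_of_le hi₀ (econf_le_R s x IA IB R hRt j i₀)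
  have key : ∀ (I : Finset (Fin m)) (hI : I.Nonempty), IA ∩ IB ⊆ I →
      push s R I hI f = f → i₀ ∉ I → False := by
    intro I hI hsub hfix hi₀I
    have heq : min R (I.inf' hI fun a => f j a + dist (s a) (s i₀)) = f j i₀ := by
      have hc := congrFun (congrFun hfix j) i₀
      rwa [push, if_neg hi₀I] at hc
    have hMeq : (I.inf' hI fun a => f j a + dist (s a) (s i₀)) = f j i₀ := by
      rcases le_total R (I.inf' hI fun a => f j a + dist (s a) (s i₀)) with h | h
      · rw [min_eq_left h] at heq
        linarith
      · rwa [min_eq_right h] at heq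
    obtain ⟨a, haI, ha⟩ :=
      Finset.exists_mem_eq_inf' hI (fun a => f j a + dist (s a) (s i₀))
    rw [ha] at hMeq
    have hanei : a ≠ i₀ := fun h => hi₀I (h ▸ haI)
    have hd0 : 0 < dist (s a) (s i₀) := dist_pos.2 fun hcon => hanei (hs hcon)
    have hlt : f j a < f j i₀ := by linarith
    have hae : econf s x IA IB R j a ≤ f j a := by
      by_contra hcon
      push_neg at hcon
      have hamem : a ∈ (Finset.univ.filter fun i => f j i < econf s x IA IB R j i) :=
        Finset.mem_filter.2 ⟨Finset.mem_univ a, hcon⟩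
      exact absurd (hi₀min a hamem) (not_le.2 hlt)
    rcases econf_cases s x IA IB R j a with hR | ⟨c, hc, hcc⟩
    · rw [hR] at hae
      linarith
    · rw [hcc] at hae
      have h1 : dist (s c) (s i₀) ≤ dist (s c) (s a) + dist (s a) (s i₀) := dist_triangle _ _ _
      have h2 := econf_le s x IA IB R hc j i₀
      linarith
  have hiC : i₀ ∉ IA ∩ IB := by
    intro hc
    have h1 := hf.tC j i₀ hc
    have h2 := econf_diag s x IA IB R hRt hc j
    rw [h1, h2] at hi₀
    exact lt_irrefl _ hi₀
  rcases Classical.em (i₀ ∈ IA) with hA | hA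
  · rcases Classical.em (i₀ ∈ IB) with hB | hB
    · exact hiC (Finset.mem_inter.2 ⟨hA, hB⟩)
    · exact key IB hIB Finset.inter_subset_right hfixB hB
  · exact key IA hIA Finset.inter_subset_left hfixA hA

/-- One step of the chain: two good configurations agreeing over `IA` or over `IB`. -/
def StepRel (f f' : Fin n → Fin m → ℝ) : Prop :=
  Good s x IA IB R N f ∧ Good s x IA IB R N f' ∧
    ∃ I : Finset (Fin m), (I = IA ∨ I = IB) ∧ ∀ j, ∀ i ∈ I, f' j i = f j i

lemma stepRel_symm {f f' : Fin n → Fin m → ℝ} (h : StepRel s x IA IB R N f f') :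
    StepRel s x IA IB R N f' f := by
  obtain ⟨h1, h2, I, hIeq, hag⟩ := h
  exact ⟨h2, h1, I, hIeq, fun j i hi => (hag j i hi).symm⟩

lemma reach_symm {f f' : Fin n → Fin m → ℝ}
    (h : ReflTransGen (StepRel s x IA IB R N) f f') :
    ReflTransGen (StepRel s x IA IB R N) f' f := by
  induction h with
  | refl => exact .refl
  | tail _ hbc ih => exact .head (stepRel_symm s x IA IB R N hbc) ih

lemma reach_econf (hs : Function.Injective s) (hIA : IA.Nonempty) (hIB : IB.Nonempty)
    (hN : 0 < N)
    (hRt : ∀ (j : Fin n) (c i : Fin m), c ∈ IA ∩ IB →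
      dist (x j) (s c) + dist (s c) (s i) ≤ R)
    (PR : ∃ k : ℤ, R = (k : ℝ) / N)
    (Pd : ∀ a i : Fin m, ∃ k : ℤ, dist (s a) (s i) = (k : ℝ) / N)
    {f : Fin n → Fin m → ℝ} (hf : Good s x IA IB R N f) :
    ReflTransGen (StepRel s x IA IB R N) f (econf s x IA IB R) := by
  classical
  have hN' : (0 : ℝ) < N := by exact_mod_cast hN
  obtain ⟨K, hK⟩ := exists_nat_ge
    ((∑ j : Fin n, ∑ i : Fin m, (econf s x IA IB R j i - f j i)) * N)
  have hKdiv : (∑ j : Fin n, ∑ i : Fin m, (econf s x IA IB R j i - f j i)) ≤ K / N := by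
    rw [le_div_iff₀ hN']
    exact hK
  clear hK
  induction K generalizing f with
  | zero =>
    have hfe : f = econf s x IA IB R := by
      funext j i
      refine le_antisymm (hf.le_e j i) (not_lt.1 fun hlt => ?_)
      have hterm : ∀ (j' : Fin n) (i' : Fin m),
          0 ≤ econf s x IA IB R j' i' - f j' i' :=
        fun j' i' => sub_nonneg.2 (hf.le_e j' i')
      have h1 : econf s x IA IB R j i - f j i
          ≤ ∑ j' : Fin n, ∑ i' : Fin m, (econf s x IA IB R j' i' - f j' i') := by
        calc econf s x IA IB R j i - f j i
            ≤ ∑ i' : Fin m, (econf s x IA IB R j i' - f j i') :=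
              Finset.single_le_sum (fun i' _ => hterm j i') (Finset.mem_univ i)
          _ ≤ ∑ j' : Fin n, ∑ i' : Fin m, (econf s x IA IB R j' i' - f j' i') :=
              Finset.single_le_sum
                (fun j' _ => Finset.sum_nonneg fun i' _ => hterm j' i')
                (Finset.mem_univ j)
      have h2 : (0 : ℝ) < econf s x IA IB R j i - f j i := sub_pos.2 hlt
      simp only [Nat.cast_zero, zero_div] at hKdiv
      linarith
    rw [hfe]
  | succ K ih =>
    by_cases heq : f = econf s x IA IB R
    · rw [heq]
    · have hmove : push s R IA hIA f ≠ f ∨ push s R IB hIB f ≠ f := by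
        by_contra hcon
        push_neg at hcon
        exact heq (fixed_eq s x IA IB R N hs hIA hIB hRt hf hcon.1 hcon.2)
      obtain ⟨I, hI, hsub, hIeq, hne⟩ : ∃ (I : Finset (Fin m)) (hI : I.Nonempty),
          IA ∩ IB ⊆ I ∧ (I = IA ∨ I = IB) ∧ push s R I hI f ≠ f := by
        rcases hmove with h | h
        · exact ⟨IA, hIA, Finset.inter_subset_left, Or.inl rfl, h⟩
        · exact ⟨IB, hIB, Finset.inter_subset_right, Or.inr rfl, h⟩
      have hgood' : Good s x IA IB R N (push s R I hI f) :=
        push_good s x IA IB R N I hI hsub hf hRt PR Pd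
      have hstep : StepRel s x IA IB R N f (push s R I hI f) :=
        ⟨hf, hgood', I, hIeq, fun j i hi => by rw [push, if_pos hi]⟩
      obtain ⟨j₀, i₀, hne0⟩ : ∃ j i, push s R I hI f j i ≠ f j i := by
        by_contra hcon
        push_neg at hcon
        exact hne (funext fun j => funext fun i => hcon j i)
      have hmono := push_mono s x R I hI hf.conf hf.cap
      have hgap : f j₀ i₀ + 1 / N ≤ push s R I hI f j₀ i₀ :=
        Pgap hN (hf.pval j₀ i₀) (hgood'.pval j₀ i₀)
          (lt_of_le_of_ne (hmono j₀ i₀) (Ne.symm hne0))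
      have hsum : (∑ j : Fin n, ∑ i : Fin m,
          (econf s x IA IB R j i - push s R I hI f j i)) ≤ K / N := by
        have hkey : (1 : ℝ) / N ≤ ∑ j : Fin n, ∑ i : Fin m,
            (push s R I hI f j i - f j i) := by
          calc (1 : ℝ) / N ≤ push s R I hI f j₀ i₀ - f j₀ i₀ := by linarith
            _ ≤ ∑ i : Fin m, (push s R I hI f j₀ i - f j₀ i) :=
                Finset.single_le_sum (fun i _ => sub_nonneg.2 (hmono j₀ i))
                  (Finset.mem_univ i₀)
            _ ≤ ∑ j : Fin n, ∑ i : Fin m, (push s R I hI f j i - f j i) :=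
                Finset.single_le_sum
                  (fun j _ => Finset.sum_nonneg fun i _ => sub_nonneg.2 (hmono j i))
                  (Finset.mem_univ j₀)
        have hexp : (∑ j : Fin n, ∑ i : Fin m,
              (econf s x IA IB R j i - push s R I hI f j i))
            = (∑ j : Fin n, ∑ i : Fin m, (econf s x IA IB R j i - f j i))
              - ∑ j : Fin n, ∑ i : Fin m, (push s R I hI f j i - f j i) := by
          rw [← Finset.sum_sub_distrib]
          refine Finset.sum_congr rfl fun j _ => ?_
          rw [← Finset.sum_sub_distrib]
          refine Finset.sum_congr rfl fun i _ => ?_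
          ring
        have hcast : ((K + 1 : ℕ) : ℝ) / N = K / N + 1 / N := by
          push_cast
          ring
        rw [hexp]
        rw [hcast] at hKdiv
        linarith
      exact .head hstep (ih hgood' hsum)

end Core


section Lift

variable {U : Type*} [MetricSpace U]
variable {m n : ℕ} (s : Fin m → U) (x : Fin n → U) (IA IB : Finset (Fin m)) (R : ℝ) (N : ℕ)

lemma chain_lift
    (hrat : ∀ x y : U, ∃ r : ℚ, dist x y = (r : ℝ))
    (huniv : ∀ (X : Type) (_ : MetricSpace X) (_ : Finite X),
      (∀ x y : X, ∃ r : ℚ, dist x y = (r : ℝ)) → ∃ f : X → U, Isometry f)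
    (hhomog : ∀ (s : Finset U) (f : U → U),
      (∀ x ∈ s, ∀ y ∈ s, dist (f x) (f y) = dist x y) →
      ∃ g : U ≃ᵢ U, ∀ x ∈ s, g x = f x)
    (A B : Finset U)
    (hAsurj : ∀ u ∈ A, ∃ i ∈ IA, s i = u) (hBsurj : ∀ u ∈ B, ∃ i ∈ IB, s i = u)
    {f f' : Fin n → Fin m → ℝ}
    (h : ReflTransGen (StepRel s x IA IB R N) f f') :
    ∀ z : Fin n → U, (∀ j i, dist (z j) (s i) = f j i) →
      (∀ j k, dist (z j) (z k) = dist (x j) (x k)) →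
      ∃ h : U ≃ᵢ U,
        h ∈ Subgroup.closure
          ({g : U ≃ᵢ U | ∀ u ∈ A, g u = u} ∪ {g : U ≃ᵢ U | ∀ u ∈ B, g u = u}) ∧
        ∃ z' : Fin n → U, (∀ j i, dist (z' j) (s i) = f' j i) ∧
          (∀ j k, dist (z' j) (z' k) = dist (x j) (x k)) ∧ ∀ j, h (z j) = z' j := by
  classical
  induction h with
  | refl =>
    intro z hz hzD
    exact ⟨1, one_mem _, z, hz, hzD, fun j => rfl⟩
  | @tail b c hab hbc ih =>
    intro z hz hzD
    obtain ⟨h₁, hmem, z', hz', hz'D, happ⟩ := ih z hz hzD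
    obtain ⟨hgb, hgc, I, hIeq, hag⟩ := hbc
    have hratc : ∀ j i, ∃ q : ℚ, c j i = (q : ℝ) := by
      intro j i
      obtain ⟨k, hk⟩ := hgc.pval j i
      exact ⟨(k : ℚ) / (N : ℚ), by rw [hk]; push_cast; ring⟩
    obtain ⟨z'', hz'', hz''D⟩ := realize hrat huniv hhomog s x c hratc
      hgc.conf.lip hgc.conf.tri hgc.conf.lipD hgc.conf.triD
    have hmat : ∀ a b : {a // a ∈ I} ⊕ Fin n,
        dist (Sum.elim (fun a : {a // a ∈ I} => s a.1) z' a)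
             (Sum.elim (fun a : {a // a ∈ I} => s a.1) z' b)
        = dist (Sum.elim (fun a : {a // a ∈ I} => s a.1) z'' a)
             (Sum.elim (fun a : {a // a ∈ I} => s a.1) z'' b) := by
      rintro (a | j) (a' | j') <;> simp only [Sum.elim_inl, Sum.elim_inr]
      · rw [dist_comm, hz' j' a.1, dist_comm (s a.1) (z'' j'), hz'' j' a.1,
          hag j' a.1 a.2]
      · rw [hz' j a'.1, hz'' j a'.1, hag j a'.1 a'.2]
      · rw [hz'D, hz''D]
    obtain ⟨σ, hσ⟩ := extend hhomog
      (Sum.elim (fun a : {a // a ∈ I} => s a.1) z')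
      (Sum.elim (fun a : {a // a ∈ I} => s a.1) z'') hmat
    have hσgen : σ ∈ ({g : U ≃ᵢ U | ∀ u ∈ A, g u = u} ∪
        {g : U ≃ᵢ U | ∀ u ∈ B, g u = u}) := by
      rcases hIeq with rfl | rfl
      · left
        intro u hu
        obtain ⟨i, hiI, rfl⟩ := hAsurj u hu
        exact hσ (Sum.inl ⟨i, hiI⟩)
      · right
        intro u hu
        obtain ⟨i, hiI, rfl⟩ := hBsurj u hu
        exact hσ (Sum.inl ⟨i, hiI⟩)
    refine ⟨σ * h₁, mul_mem (Subgroup.subset_closure hσgen) hmem,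
      z'', hz'', hz''D, fun j => ?_⟩
    have hmul : (σ * h₁) (z j) = σ (h₁ (z j)) := rfl
    rw [hmul, happ j]
    exact hσ (Sum.inr j)

end Lift

section Assemble

variable {U : Type*} [MetricSpace U]

lemma exists_rat_bound (V : Finset ℝ) :
    ∃ q : ℚ, (0 : ℝ) ≤ (q : ℝ) ∧ ∀ v ∈ V, v ≤ (q : ℝ) := by
  classical
  induction V using Finset.induction_on with
  | empty => exact ⟨0, by norm_num, by simp⟩
  | @insert a V _ ih =>
    obtain ⟨q, hq0, hqb⟩ := ih
    obtain ⟨qa, hqa⟩ := exists_rat_gt a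
    refine ⟨max q qa, ?_, ?_⟩
    · rw [Rat.cast_max]
      exact le_trans hq0 (le_max_left _ _)
    · intro v hv
      rw [Rat.cast_max]
      rcases Finset.mem_insert.1 hv with rfl | hv
      · exact le_trans hqa.le (le_max_right _ _)
      · exact le_trans (hqb v hv) (le_max_left _ _)

lemma exists_common_den (W : Finset ℝ) (h : ∀ v ∈ W, ∃ q : ℚ, v = (q : ℝ)) :
    ∃ N : ℕ, 0 < N ∧ ∀ v ∈ W, ∃ k : ℤ, v = (k : ℝ) / N := by
  classical
  induction W using Finset.induction_on with
  | empty => exact ⟨1, one_pos, by simp⟩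
  | @insert a W _ ih =>
    obtain ⟨N, hN, hW⟩ := ih fun v hv => h v (Finset.mem_insert_of_mem hv)
    obtain ⟨q, hq⟩ := h a (Finset.mem_insert_self a W)
    refine ⟨N * q.den, Nat.mul_pos hN q.pos, ?_⟩
    intro v hv
    have hNne : (N : ℝ) ≠ 0 := by positivity
    have hdenne : ((q.den : ℕ) : ℝ) ≠ 0 := by
      have := q.den_pos
      positivity
    rcases Finset.mem_insert.1 hv with rfl | hv
    · refine ⟨q.num * N, ?_⟩
      rw [hq, Rat.cast_def]
      push_cast
      field_simp
    · obtain ⟨k, hk⟩ := hW v hv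
      refine ⟨k * q.den, ?_⟩
      rw [hk]
      push_cast
      field_simp

lemma approx
    (hrat : ∀ x y : U, ∃ r : ℚ, dist x y = (r : ℝ))
    (huniv : ∀ (X : Type) (_ : MetricSpace X) (_ : Finite X),
      (∀ x y : X, ∃ r : ℚ, dist x y = (r : ℝ)) → ∃ f : X → U, Isometry f)
    (hhomog : ∀ (s : Finset U) (f : U → U),
      (∀ x ∈ s, ∀ y ∈ s, dist (f x) (f y) = dist x y) →
      ∃ g : U ≃ᵢ U, ∀ x ∈ s, g x = f x)
    (A B : Finset U) (hA : A.Nonempty) (hB : B.Nonempty)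
    (g : U ≃ᵢ U) (hg : ∀ u ∈ (A : Set U) ∩ (B : Set U), g u = u)
    (F : Finset U) :
    ∃ h : U ≃ᵢ U,
      h ∈ Subgroup.closure
        ({g : U ≃ᵢ U | ∀ u ∈ A, g u = u} ∪ {g : U ≃ᵢ U | ∀ u ∈ B, g u = u}) ∧
      ∀ u ∈ F, h u = g u := by
  classical
  -- enumerate S = A ∪ B
  set S : Finset U := A ∪ B with hS
  set m : ℕ := Fintype.card ↥S with hm
  set es : ↥S ≃ Fin m := Fintype.equivFin ↥S with hes
  set s : Fin m → U := fun i => ((es.symm i : ↥S) : U) with hsdef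
  have hs : Function.Injective s := by
    intro i i' hii
    have h1 : (es.symm i : ↥S) = (es.symm i' : ↥S) := Subtype.coe_injective hii
    exact es.symm.injective h1
  set IA : Finset (Fin m) := Finset.univ.filter (fun i => s i ∈ A) with hIAdef
  set IB : Finset (Fin m) := Finset.univ.filter (fun i => s i ∈ B) with hIBdef
  have hAmem : ∀ i ∈ IA, s i ∈ A := fun i hi => (Finset.mem_filter.1 hi).2
  have hBmem : ∀ i ∈ IB, s i ∈ B := fun i hi => (Finset.mem_filter.1 hi).2
  have hAsurj : ∀ u ∈ A, ∃ i ∈ IA, s i = u := by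
    intro u hu
    have huS : u ∈ S := Finset.mem_union_left _ hu
    refine ⟨es ⟨u, huS⟩, ?_, ?_⟩
    · refine Finset.mem_filter.2 ⟨Finset.mem_univ _, ?_⟩
      rw [hsdef]
      simp only [Equiv.symm_apply_apply]
      exact hu
    · rw [hsdef]
      simp only [Equiv.symm_apply_apply]
  have hBsurj : ∀ u ∈ B, ∃ i ∈ IB, s i = u := by
    intro u hu
    have huS : u ∈ S := Finset.mem_union_right _ hu
    refine ⟨es ⟨u, huS⟩, ?_, ?_⟩
    · refine Finset.mem_filter.2 ⟨Finset.mem_univ _, ?_⟩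
      rw [hsdef]
      simp only [Equiv.symm_apply_apply]
      exact hu
    · rw [hsdef]
      simp only [Equiv.symm_apply_apply]
  have hIA : IA.Nonempty := by
    obtain ⟨a, ha⟩ := hA
    obtain ⟨i, hi, -⟩ := hAsurj a ha
    exact ⟨i, hi⟩
  have hIB : IB.Nonempty := by
    obtain ⟨b, hb⟩ := hB
    obtain ⟨i, hi, -⟩ := hBsurj b hb
    exact ⟨i, hi⟩
  have hICmem : ∀ c ∈ IA ∩ IB, (s c ∈ A ∧ s c ∈ B) := by
    intro c hc
    exact ⟨hAmem c (Finset.mem_of_mem_inter_left hc),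
      hBmem c (Finset.mem_of_mem_inter_right hc)⟩
  have hgfix : ∀ c ∈ IA ∩ IB, g (s c) = s c := by
    intro c hc
    exact hg (s c) ⟨(hICmem c hc).1, (hICmem c hc).2⟩
  -- enumerate F
  set n : ℕ := Fintype.card ↥F with hn
  set ef : ↥F ≃ Fin n := Fintype.equivFin ↥F with hef
  set x : Fin n → U := fun j => ((ef.symm j : ↥F) : U) with hxdef
  have hxF : ∀ u ∈ F, ∃ j, x j = u := by
    intro u hu
    refine ⟨ef ⟨u, hu⟩, ?_⟩
    rw [hxdef]
    simp only [Equiv.symm_apply_apply]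
  set y : Fin n → U := fun j => g (x j) with hydef
  -- the bound R
  set V1 : Finset ℝ :=
    Finset.image (fun p : Fin n × Fin m => dist (x p.1) (s p.2)) Finset.univ with hV1
  set V2 : Finset ℝ :=
    Finset.image (fun p : Fin n × Fin m => dist (y p.1) (s p.2)) Finset.univ with hV2
  set V3 : Finset ℝ :=
    Finset.image (fun p : (Fin n × Fin m) × Fin m =>
      dist (x p.1.1) (s p.1.2) + dist (s p.1.2) (s p.2)) Finset.univ with hV3
  obtain ⟨q, hq0, hqb⟩ := exists_rat_bound (V1 ∪ V2 ∪ V3)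
  set R : ℝ := (q : ℝ) with hR
  have capX : ∀ j i, dist (x j) (s i) ≤ R := by
    intro j i
    exact hqb _ (Finset.mem_union_left _ (Finset.mem_union_left _
      (Finset.mem_image_of_mem _ (Finset.mem_univ (j, i)))))
  have capY : ∀ j i, dist (y j) (s i) ≤ R := by
    intro j i
    exact hqb _ (Finset.mem_union_left _ (Finset.mem_union_right _
      (Finset.mem_image_of_mem _ (Finset.mem_univ (j, i)))))
  have hRt : ∀ (j : Fin n) (c i : Fin m), c ∈ IA ∩ IB →
      dist (x j) (s c) + dist (s c) (s i) ≤ R := by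
    intro j c i _
    exact hqb _ (Finset.mem_union_right _
      (Finset.mem_image_of_mem _ (Finset.mem_univ ((j, c), i))))
  -- common denominator N
  set Wd : Finset ℝ :=
    Finset.image (fun p : Fin m × Fin m => dist (s p.1) (s p.2)) Finset.univ with hWd
  have hWrat : ∀ v ∈ V1 ∪ V2 ∪ Wd ∪ {R}, ∃ r : ℚ, v = (r : ℝ) := by
    intro v hv
    rcases Finset.mem_union.1 hv with hv | hv
    · rcases Finset.mem_union.1 hv with hv | hv
      · rcases Finset.mem_union.1 hv with hv | hv
        · obtain ⟨p, -, rfl⟩ := Finset.mem_image.1 hv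
          exact hrat _ _
        · obtain ⟨p, -, rfl⟩ := Finset.mem_image.1 hv
          exact hrat _ _
      · obtain ⟨p, -, rfl⟩ := Finset.mem_image.1 hv
        exact hrat _ _
    · rw [Finset.mem_singleton.1 hv]
      exact ⟨q, rfl⟩
  obtain ⟨N, hN, hPW⟩ := exists_common_den _ hWrat
  have PR : ∃ k : ℤ, R = (k : ℝ) / N :=
    hPW R (Finset.mem_union_right _ (Finset.mem_singleton_self R))
  have Pd : ∀ a i : Fin m, ∃ k : ℤ, dist (s a) (s i) = (k : ℝ) / N := by
    intro a i
    exact hPW _ (Finset.mem_union_left _ (Finset.mem_union_right _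
      (Finset.mem_image_of_mem _ (Finset.mem_univ (a, i)))))
  have PX : ∀ (j : Fin n) (i : Fin m), ∃ k : ℤ, dist (x j) (s i) = (k : ℝ) / N := by
    intro j i
    exact hPW _ (Finset.mem_union_left _ (Finset.mem_union_left _
      (Finset.mem_union_left _ (Finset.mem_image_of_mem _ (Finset.mem_univ (j, i))))))
  have PY : ∀ (j : Fin n) (i : Fin m), ∃ k : ℤ, dist (y j) (s i) = (k : ℝ) / N := by
    intro j i
    exact hPW _ (Finset.mem_union_left _ (Finset.mem_union_left _
      (Finset.mem_union_right _ (Finset.mem_image_of_mem _ (Finset.mem_univ (j, i))))))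
  -- the two configurations
  set fX : Fin n → Fin m → ℝ := fun j i => dist (x j) (s i) with hfX
  set fY : Fin n → Fin m → ℝ := fun j i => dist (y j) (s i) with hfY
  have hyd : ∀ j k, dist (y j) (y k) = dist (x j) (x k) := by
    intro j k
    rw [hydef]
    exact g.dist_eq _ _
  have htC_Y : ∀ (j : Fin n), ∀ c ∈ IA ∩ IB, dist (y j) (s c) = dist (x j) (s c) := by
    intro j c hc
    conv_lhs => rw [← hgfix c hc]
    rw [hydef]
    exact g.dist_eq _ _
  have goodX : Good s x IA IB R N fX := by
    refine ⟨⟨?_, ?_, ?_, ?_⟩, capX, ?_, fun j c hc => rfl, PX⟩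
    · intro j i i'; exact dist_triangle _ _ _
    · intro j i i'
      have h1 : dist (s i) (s i') ≤ dist (s i) (x j) + dist (x j) (s i') :=
        dist_triangle _ _ _
      rw [dist_comm (s i) (x j)] at h1
      exact h1
    · intro j k i; exact dist_triangle _ _ _
    · intro j k i
      have h1 : dist (x j) (x k) ≤ dist (x j) (s i) + dist (s i) (x k) :=
        dist_triangle _ _ _
      rw [dist_comm (s i) (x k)] at h1
      exact h1
    · intro j i
      rcases econf_cases s x IA IB R j i with h | ⟨c, hc, h⟩
      · rw [h]; exact capX j i
      · rw [h]; exact dist_triangle _ _ _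
  have goodY : Good s x IA IB R N fY := by
    refine ⟨⟨?_, ?_, ?_, ?_⟩, capY, ?_, htC_Y, PY⟩
    · intro j i i'; exact dist_triangle _ _ _
    · intro j i i'
      have h1 : dist (s i) (s i') ≤ dist (s i) (y j) + dist (y j) (s i') :=
        dist_triangle _ _ _
      rw [dist_comm (s i) (y j)] at h1
      exact h1
    · intro j k i
      have h1 : dist (y j) (s i) ≤ dist (y j) (y k) + dist (y k) (s i) :=
        dist_triangle _ _ _
      rw [hyd j k] at h1
      exact h1
    · intro j k i
      have h1 : dist (y j) (y k) ≤ dist (y j) (s i) + dist (s i) (y k) :=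
        dist_triangle _ _ _
      rw [hyd j k, dist_comm (s i) (y k)] at h1
      exact h1
    · intro j i
      rcases econf_cases s x IA IB R j i with h | ⟨c, hc, h⟩
      · rw [h]; exact capY j i
      · rw [h]
        have h1 : dist (y j) (s i) ≤ dist (y j) (s c) + dist (s c) (s i) :=
          dist_triangle _ _ _
        rw [htC_Y j c hc] at h1
        exact h1
  -- the chain
  have reachX := reach_econf s x IA IB R N hs hIA hIB hN hRt PR Pd goodX
  have reachY := reach_econf s x IA IB R N hs hIA hIB hN hRt PR Pd goodY
  have reachXY : ReflTransGen (StepRel s x IA IB R N) fX fY :=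
    reachX.trans (reach_symm s x IA IB R N reachY)
  obtain ⟨h₁, hmem, z', hz', hz'D, happ⟩ :=
    chain_lift s x IA IB R N hrat huniv hhomog A B hAsurj hBsurj reachXY
      x (fun j i => rfl) (fun j k => rfl)
  -- final correction fixing all of S
  have hmat : ∀ a b : Fin m ⊕ Fin n,
      dist (Sum.elim s z' a) (Sum.elim s z' b)
        = dist (Sum.elim s y a) (Sum.elim s y b) := by
    rintro (i | j) (i' | j') <;> simp only [Sum.elim_inl, Sum.elim_inr]
    · rw [dist_comm, hz' j' i, hfY]
      simp only
      rw [dist_comm]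
    · rw [hz' j i', hfY]
    · rw [hz'D j j', hyd j j']
  obtain ⟨σ, hσ⟩ := extend hhomog (Sum.elim s z') (Sum.elim s y) hmat
  have hσgen : σ ∈ ({g : U ≃ᵢ U | ∀ u ∈ A, g u = u} ∪
      {g : U ≃ᵢ U | ∀ u ∈ B, g u = u}) := by
    left
    intro u hu
    obtain ⟨i, -, rfl⟩ := hAsurj u hu
    exact hσ (Sum.inl i)
  refine ⟨σ * h₁, mul_mem (Subgroup.subset_closure hσgen) hmem, ?_⟩
  intro u hu
  obtain ⟨j, rfl⟩ := hxF u hu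
  have hmul : (σ * h₁) (x j) = σ (h₁ (x j)) := rfl
  rw [hmul, happ j]
  exact hσ (Sum.inr j)

end Assemble

end RUS

/-- Corollary to Theorem 14 for the rational Urysohn space `U`: a countable metric space
with rational distances, universal for finite metric spaces with rational distances and
ultrahomogeneous. With the topology of pointwise convergence (`U` discrete) on `Iso(U)`,
the pointwise stabilizer of `A ∩ B` is the closure of the subgroup generated by the
stabilizers of `A` and of `B`. -/
theorem rational_urysohn_stabilizer_closure
    (U : Type*) [MetricSpace U] [Countable U]
    (hrat : ∀ x y : U, ∃ r : ℚ, dist x y = (r : ℝ))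
    (huniv : ∀ (X : Type) (_ : MetricSpace X) (_ : Finite X),
      (∀ x y : X, ∃ r : ℚ, dist x y = (r : ℝ)) → ∃ f : X → U, Isometry f)
    (hhomog : ∀ (s : Finset U) (f : U → U),
      (∀ x ∈ s, ∀ y ∈ s, dist (f x) (f y) = dist x y) →
      ∃ g : U ≃ᵢ U, ∀ x ∈ s, g x = f x)
    (A B : Finset U) :
    {g : U ≃ᵢ U | ∀ x ∈ (A : Set U) ∩ (B : Set U), g x = x} =
      @closure _
        (TopologicalSpace.induced
          (fun f : U ≃ᵢ U => ((⇑f, ⇑f.symm) : (U → U) × (U → U)))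
          (@instTopologicalSpaceProd _ _
            (@Pi.topologicalSpace U (fun _ => U) (fun _ => ⊥))
            (@Pi.topologicalSpace U (fun _ => U) (fun _ => ⊥))))
        (↑(Subgroup.closure
          ({g : U ≃ᵢ U | ∀ x ∈ A, g x = x} ∪ {g : U ≃ᵢ U | ∀ x ∈ B, g x = x}))) := by
  classical
  letI tU : TopologicalSpace U := ⊥
  haveI : DiscreteTopology U := ⟨rfl⟩
  letI tG : TopologicalSpace (U ≃ᵢ U) :=
    TopologicalSpace.induced (fun f : U ≃ᵢ U => ((⇑f, ⇑f.symm) : (U → U) × (U → U)))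
      instTopologicalSpaceProd
  show {g : U ≃ᵢ U | ∀ x ∈ (A : Set U) ∩ (B : Set U), g x = x} =
      closure (↑(Subgroup.closure
        ({g : U ≃ᵢ U | ∀ x ∈ A, g x = x} ∪ {g : U ≃ᵢ U | ∀ x ∈ B, g x = x})))
  apply Set.Subset.antisymm
  · -- stabilizer of A ∩ B is contained in the closure
    intro g hg
    by_cases hA : A.Nonempty
    · by_cases hB : B.Nonempty
      · -- main case
        rw [mem_closure_iff_nhds]
        intro t ht
        rw [nhds_induced] at ht
        obtain ⟨W, hW, hWt⟩ := Filter.mem_comap.1 ht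
        rw [nhds_prod_eq] at hW
        obtain ⟨W1, hW1, W2, hW2, hprod⟩ := Filter.mem_prod_iff.1 hW
        have hnp : ∀ f : U → U, (nhds f : Filter (U → U)) = Filter.pi fun u => pure (f u) := by
          intro f
          rw [nhds_pi]
          congr 1
          funext u
          exact congrFun (nhds_discrete U) (f u)
        rw [hnp] at hW1
        rw [hnp] at hW2
        obtain ⟨I1, hI1fin, t1, ht1, hsub1⟩ := Filter.mem_pi.1 hW1
        obtain ⟨I2, hI2fin, t2, ht2, hsub2⟩ := Filter.mem_pi.1 hW2
        set E : Finset U := hI1fin.toFinset ∪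
          Finset.image (fun u => g.symm u) hI2fin.toFinset with hE
        obtain ⟨h, hmem, hagree⟩ := RUS.approx hrat huniv hhomog A B hA hB g hg E
        refine ⟨h, hWt ?_, hmem⟩
        refine hprod ⟨?_, ?_⟩
        · apply hsub1
          intro u hu
          have hu' : u ∈ E := Finset.mem_union_left _ (hI1fin.mem_toFinset.2 hu)
          show h u ∈ t1 u
          rw [hagree u hu']
          exact Filter.mem_pure.1 (ht1 u)
        · apply hsub2
          intro u hu
          have hgsE : g.symm u ∈ E := Finset.mem_union_right _
            (Finset.mem_image_of_mem _ (hI2fin.mem_toFinset.2 hu))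
          have h1 : h (g.symm u) = g (g.symm u) := hagree _ hgsE
          rw [g.apply_symm_apply] at h1
          have h2 : h.symm u = g.symm u := by
            have h3 := congrArg h.symm h1
            rw [h.symm_apply_apply] at h3
            exact h3.symm
          show h.symm u ∈ t2 u
          rw [h2]
          exact Filter.mem_pure.1 (ht2 u)
      · -- B empty
        have hBe : B = ∅ := Finset.not_nonempty_iff_eq_empty.1 hB
        have hgen : g ∈ ({g : U ≃ᵢ U | ∀ x ∈ A, g x = x} ∪
            {g : U ≃ᵢ U | ∀ x ∈ B, g x = x}) := by
          right
          intro u hu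
          rw [hBe] at hu
          exact absurd hu (Finset.notMem_empty u)
        exact subset_closure (Subgroup.subset_closure hgen)
    · -- A empty
      have hAe : A = ∅ := Finset.not_nonempty_iff_eq_empty.1 hA
      have hgen : g ∈ ({g : U ≃ᵢ U | ∀ x ∈ A, g x = x} ∪
          {g : U ≃ᵢ U | ∀ x ∈ B, g x = x}) := by
        left
        intro u hu
        rw [hAe] at hu
        exact absurd hu (Finset.notMem_empty u)
      exact subset_closure (Subgroup.subset_closure hgen)
  · -- the closure is contained in the stabilizer of A ∩ B
    have hclosed : IsClosed {g : U ≃ᵢ U | ∀ u ∈ (A : Set U) ∩ (B : Set U), g u = u} := by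
      have heq : {g : U ≃ᵢ U | ∀ u ∈ (A : Set U) ∩ (B : Set U), g u = u}
          = ⋂ u ∈ (A : Set U) ∩ (B : Set U), {g : U ≃ᵢ U | g u = u} := by
        ext g
        simp
      rw [heq]
      refine isClosed_biInter fun u hu => ?_
      have hpre : {g : U ≃ᵢ U | g u = u}
          = (fun g : U ≃ᵢ U => ((⇑g, ⇑g.symm) : (U → U) × (U → U))) ⁻¹'
            ((fun p : (U → U) × (U → U) => p.1 u) ⁻¹' {u}) := rfl
      rw [hpre]
      apply IsClosed.preimage continuous_induced_dom
      apply IsClosed.preimage ((continuous_apply u).comp continuous_fst)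
      exact isClosed_singleton
    refine closure_minimal ?_ hclosed
    intro h hh
    refine Subgroup.closure_induction ?_ ?_ ?_ ?_ hh
    · intro v hv u hu
      rcases hv with hv | hv
      · exact hv u hu.1
      · exact hv u hu.2
    · intro u hu
      rfl
    · intro v w _ _ hv hw u hu
      have hmul : (v * w) u = v (w u) := rfl
      rw [hmul, hw u hu, hv u hu]
    · intro v _ hv u hu
      have h1 : v u = u := hv u hu
      have h2 : v.symm u = u := by
        conv_lhs => rw [← h1]
        exact v.symm_apply_apply u
      exact h2
end

section
/- If 𝕂 is a countable structure equipped with a linear order preserved by all automorphisms, and Aut(𝕂) ≠ {id} carries the topology of pointwise convergence (𝕂 discrete), then Aut(𝕂) has exactly two classes of topological similarity of single elements: the class {id}, and the class of all non-trivial automorphisms. In particular, every non-trivial g ∈ Aut(𝕂) generates a discrete subgroup isomorphic to ℤ. -/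
/-- The topology of pointwise convergence (with `K` discrete) on the permutation group
of `K`, induced by `f ↦ (f, f⁻¹)`. -/
def permTop (K : Type*) : TopologicalSpace (Equiv.Perm K) :=
  TopologicalSpace.induced
    (fun f : Equiv.Perm K => ((⇑f, ⇑f.symm) : (K → K) × (K → K)))
    (@instTopologicalSpaceProd _ _
      (@Pi.topologicalSpace K (fun _ => K) (fun _ => ⊥))
      (@Pi.topologicalSpace K (fun _ => K) (fun _ => ⊥)))

/-- The subspace topology on an automorphism group `G ≤ Perm K`. -/
def subTop {K : Type*} (G : Subgroup (Equiv.Perm K)) : TopologicalSpace G :=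
  TopologicalSpace.induced Subtype.val (permTop K)

/-- Topological similarity of single elements: `g ↦ h` extends to a bi-continuous
isomorphism `⟨g⟩ → ⟨h⟩` (subspace topologies). -/
def TopSimilarOne {K : Type*} (G : Subgroup (Equiv.Perm K)) (g h : G) : Prop :=
  letI := subTop G
  ∃ φ : Subgroup.zpowers g ≃* Subgroup.zpowers h,
    Continuous φ ∧ Continuous φ.symm ∧
      (φ ⟨g, Subgroup.mem_zpowers g⟩ : G) = h

section Aux

variable {K : Type*} [LinearOrder K] {G : Subgroup (Equiv.Perm K)}

/-- For a nontrivial strictly monotone `g`, the orbit map `n ↦ gⁿ a` is injective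
for a suitable point `a`. -/
lemma orbit_injective (hmono : ∀ f ∈ G, StrictMono ⇑f) (g : G) (hg : g ≠ 1) :
    ∃ a : K, Function.Injective (fun n : ℤ => ((g : Equiv.Perm K) ^ n) a) := by
  have hx : ∃ a : K, (g : Equiv.Perm K) a ≠ a := by
    by_contra h
    push_neg at h
    exact hg (Subtype.ext (Equiv.ext fun a => by simpa using h a))
  obtain ⟨a, ha⟩ := hx
  have hsm : ∀ n : ℤ, StrictMono ⇑((g : Equiv.Perm K) ^ n) := by
    intro n
    have := hmono ((g ^ n : G) : Equiv.Perm K) (g ^ n).2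
    simpa using this
  have hstep : ∀ n : ℤ,
      ((g : Equiv.Perm K) ^ (n + 1)) a = ((g : Equiv.Perm K) ^ n) ((g : Equiv.Perm K) a) := by
    intro n
    rw [zpow_add_one]
    rfl
  rcases lt_or_gt_of_ne ha with hlt | hgt
  · refine ⟨a, (strictAnti_int_of_succ_lt fun n => ?_).injective⟩
    simpa [hstep n] using (hsm n) hlt
  · refine ⟨a, (strictMono_int_of_lt_succ fun n => ?_).injective⟩
    simpa [hstep n] using (hsm n) hgt

lemma zpow_inj' (hmono : ∀ f ∈ G, StrictMono ⇑f) (g : G) (hg : g ≠ 1) :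
    Function.Injective (fun n : ℤ => g ^ n) := by
  obtain ⟨a, hinj⟩ := orbit_injective hmono g hg
  intro m k h
  apply hinj
  simp only []
  have : ((g ^ m : G) : Equiv.Perm K) = ((g ^ k : G) : Equiv.Perm K) := congrArg Subtype.val h
  simpa using congrFun (congrArg (fun f : Equiv.Perm K => ⇑f) this) a

/-- `⟨g⟩ ≅ Multiplicative ℤ` for nontrivial `g`, with `ofAdd 1 ↦ g`. -/
lemma exists_mulEquiv (hmono : ∀ f ∈ G, StrictMono ⇑f) (g : G) (hg : g ≠ 1) :
    ∃ e : Multiplicative ℤ ≃* Subgroup.zpowers g,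
      e (Multiplicative.ofAdd 1) = ⟨g, Subgroup.mem_zpowers g⟩ := by
  have hinj := zpow_inj' hmono g hg
  let f : Multiplicative ℤ →* Subgroup.zpowers g :=
    (zpowersHom G g).codRestrict _ (fun n => by
      exact Subgroup.zpow_mem _ (Subgroup.mem_zpowers g) _)
  have hfi : Function.Injective f := by
    intro m k h
    have : g ^ m.toAdd = g ^ k.toAdd := congrArg Subtype.val h
    exact Multiplicative.toAdd.injective (hinj this)
  have hfs : Function.Surjective f := by
    rintro ⟨y, hy⟩
    obtain ⟨k, hk⟩ := Subgroup.mem_zpowers_iff.mp hy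
    exact ⟨Multiplicative.ofAdd k, Subtype.ext hk⟩
  refine ⟨MulEquiv.ofBijective f ⟨hfi, hfs⟩, ?_⟩
  exact Subtype.ext (zpow_one g)

/-- Discreteness of `⟨g⟩` for nontrivial `g`. -/
lemma discrete_zpowers (hmono : ∀ f ∈ G, StrictMono ⇑f) (g : G) (hg : g ≠ 1) :
    @DiscreteTopology (Subgroup.zpowers g)
      (TopologicalSpace.induced Subtype.val (subTop G)) := by
  obtain ⟨a, hinj⟩ := orbit_injective hmono g hg
  letI τK : TopologicalSpace K := ⊥
  haveI : DiscreteTopology K := ⟨rfl⟩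
  have hT : (TopologicalSpace.induced (Subtype.val : Subgroup.zpowers g → G) (subTop G))
      = TopologicalSpace.induced
      (fun y : Subgroup.zpowers g =>
        ((⇑(y.val.val : Equiv.Perm K), ⇑(y.val.val : Equiv.Perm K).symm) :
          (K → K) × (K → K)))
      instTopologicalSpaceProd := by
    simp only [subTop, permTop]
    rw [induced_compose, induced_compose]
    rfl
  rw [hT]
  letI : TopologicalSpace (Subgroup.zpowers g) :=
    TopologicalSpace.induced
      (fun y : Subgroup.zpowers g =>
        ((⇑(y.val.val : Equiv.Perm K), ⇑(y.val.val : Equiv.Perm K).symm) :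
          (K → K) × (K → K)))
      instTopologicalSpaceProd
  apply discreteTopology_iff_isOpen_singleton.mpr
  intro x
  rw [isOpen_induced_iff]
  refine ⟨{p : (K → K) × (K → K) | p.1 a = (x.val.val : Equiv.Perm K) a}, ?_, ?_⟩
  · have : ({p : (K → K) × (K → K) | p.1 a = (x.val.val : Equiv.Perm K) a}) =
        (fun p : (K → K) × (K → K) => p.1 a) ⁻¹' {(x.val.val : Equiv.Perm K) a} := rfl
    rw [this]
    exact ((continuous_apply a).comp continuous_fst).isOpen_preimage _ (isOpen_discrete _)
  · ext y
    simp only [Set.mem_preimage, Set.mem_setOf_eq, Set.mem_singleton_iff]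
    constructor
    · intro hya
      obtain ⟨m, hm⟩ := Subgroup.mem_zpowers_iff.mp y.2
      obtain ⟨n, hn⟩ := Subgroup.mem_zpowers_iff.mp x.2
      have hmv : (y.val.val : Equiv.Perm K) = (g : Equiv.Perm K) ^ m := by
        rw [← hm]; simp
      have hnv : (x.val.val : Equiv.Perm K) = (g : Equiv.Perm K) ^ n := by
        rw [← hn]; simp
      have : m = n := hinj (by
        simpa [hmv, hnv] using hya)
      apply Subtype.ext; apply Subtype.ext
      rw [hmv, hnv, this]
    · intro h; rw [h]

end Aux

/-- If `𝕂` is a countable structure with a linear order preserved by all automorphisms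
and `Aut(𝕂) ≠ {1}` (pointwise convergence topology, `𝕂` discrete), then `Aut(𝕂)` has
exactly two one-dimensional topological similarity classes — `{1}` and the class of all
non-trivial automorphisms — and every non-trivial automorphism generates a discrete
subgroup isomorphic to `ℤ`. -/
theorem two_similarity_classes_ordered_structure
    (K : Type*) [Countable K] [LinearOrder K]
    (G : Subgroup (Equiv.Perm K))
    (hmono : ∀ f ∈ G, StrictMono ⇑f)
    (hG : G ≠ ⊥) :
    (∀ g h : G, g ≠ 1 → h ≠ 1 → TopSimilarOne G g h) ∧
    (∀ g : G, g ≠ 1 → ¬ TopSimilarOne G 1 g) ∧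
    (∀ g : G, g ≠ 1 →
      (@DiscreteTopology (Subgroup.zpowers g)
        (TopologicalSpace.induced Subtype.val (subTop G))) ∧
      Nonempty (Multiplicative ℤ ≃* Subgroup.zpowers g)) := by
  refine ⟨?_, ?_, ?_⟩
  · intro g h hgne hhne
    obtain ⟨eg, heg⟩ := exists_mulEquiv hmono g hgne
    obtain ⟨eh, heh⟩ := exists_mulEquiv hmono h hhne
    letI := subTop G
    haveI : DiscreteTopology (Subgroup.zpowers g) := discrete_zpowers hmono g hgne
    haveI : DiscreteTopology (Subgroup.zpowers h) := discrete_zpowers hmono h hhne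
    refine ⟨eg.symm.trans eh, continuous_of_discreteTopology,
      continuous_of_discreteTopology, ?_⟩
    · have : eg.symm ⟨g, Subgroup.mem_zpowers g⟩ = Multiplicative.ofAdd 1 := by
        rw [← heg, MulEquiv.symm_apply_apply]
      simp only [MulEquiv.trans_apply, this, heh]
  · intro g hgne h
    obtain ⟨φ, _, _, hφ⟩ := h
    apply hgne
    have h1 : (⟨(1 : G), Subgroup.mem_zpowers 1⟩ : Subgroup.zpowers (1 : G)) = 1 := rfl
    rw [h1, map_one] at hφ
    exact hφ.symm
  · intro g hgne
    refine ⟨discrete_zpowers hmono g hgne, ?_⟩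
    obtain ⟨e, _⟩ := exists_mulEquiv hmono g hgne
    exact ⟨e⟩
end

section
/- Growth of distances under alternating extensions (Claim 3 of Theorem 10): in the setting of the inductive construction of Theorem 10, let x ∈ fix(p) △ fix(q) and c ∈ A, and suppose that the distance between w_i(c) and x does not pass through any point of fix(p) ∩ fix(q). Then d(w_i(c), x) ≥ ⌊i/2⌋ · den(A). -/
/-- Claim 3 of Theorem 10 (growth of distances under alternating free extensions),
stated with the structural properties of the inductive construction as hypotheses.
`Fp`, `Fq` are the fixed-point sets of the partial isometries `p`, `q`, `δ = den(A)` is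
the minimal positive distance of `A`, and `y i = w_i(c)` is the image of `c ∈ A` after
the `i`-th step. Odd steps extend `p` (so distances to `Fp` are unchanged and distances
from the new point to old points pass through `Fp`, by free amalgamation over `Fp`);
even steps do the same with `q` and `Fq`. If the distance from `w_i(c)` to a point
`x ∈ Fp △ Fq` passes through no common fixed point, then `d(w_i(c),x) ≥ ⌊i/2⌋·den(A)`. -/
theorem claim3_growth_of_distances
    {X : Type*} [MetricSpace X] (Fp Fq : Set X) (δ : ℝ) (hδ : 0 < δ)
    -- distinct points of `Fp ∪ Fq` are at distance at least `δ = den(A)`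
    (hsep : ∀ z ∈ Fp ∪ Fq, ∀ z' ∈ Fp ∪ Fq, z ≠ z' → δ ≤ dist z z')
    (y : ℕ → X)
    -- odd steps: distances to `Fp` are preserved, and distances from the new point
    -- to `Fp ∪ Fq` pass through a point of `Fp` (free amalgamation over `fix p̄`)
    (hodd : ∀ i : ℕ, Odd (i + 1) →
      (∀ z ∈ Fp, dist (y (i + 1)) z = dist (y i) z) ∧
      (∀ x ∈ Fp ∪ Fq, ∃ z ∈ Fp, dist (y (i + 1)) x = dist (y (i + 1)) z + dist z x))
    -- even steps: the same with the roles of `p` and `q` interchanged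
    (heven : ∀ i : ℕ, Even (i + 1) →
      (∀ z ∈ Fq, dist (y (i + 1)) z = dist (y i) z) ∧
      (∀ x ∈ Fp ∪ Fq, ∃ z ∈ Fq, dist (y (i + 1)) x = dist (y (i + 1)) z + dist z x)) :
    ∀ i : ℕ, ∀ x ∈ symmDiff Fp Fq,
      (¬ ∃ z ∈ Fp ∩ Fq, dist (y i) x = dist (y i) z + dist z x) →
      ((i / 2 : ℕ) : ℝ) * δ ≤ dist (y i) x := by
  -- Strengthened statement: on the `Fq \ Fp` side the bound is `⌈i/2⌉·δ`.
  have key : ∀ i : ℕ,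
      (∀ x ∈ Fp, x ∉ Fq → (¬ ∃ z ∈ Fp ∩ Fq, dist (y i) x = dist (y i) z + dist z x) →
        ((i / 2 : ℕ) : ℝ) * δ ≤ dist (y i) x) ∧
      (∀ x ∈ Fq, x ∉ Fp → (¬ ∃ z ∈ Fp ∩ Fq, dist (y i) x = dist (y i) z + dist z x) →
        (((i + 1) / 2 : ℕ) : ℝ) * δ ≤ dist (y i) x) := by
    intro i
    induction i with
    | zero =>
        constructor <;> intro x hx hx' _ <;> simpa using dist_nonneg
    | succ i ih =>
      rcases Nat.even_or_odd (i + 1) with he | ho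
      · -- even step: extends `q`
        obtain ⟨hpres, hpass⟩ := heven i he
        have hi : i % 2 = 1 := by
          rcases he with ⟨k, hk⟩; omega
        constructor
        · -- `x ∈ Fp \ Fq`: the distance passes through `z ∈ Fq \ Fp`, `z ≠ x`.
          intro x hxp hxq hnp
          obtain ⟨z, hz, heq⟩ := hpass x (Or.inl hxp)
          have hzp : z ∉ Fp := fun h => hnp ⟨z, ⟨h, hz⟩, heq⟩
          have hzx : z ≠ x := fun h => hzp (h ▸ hxp)
          have hdz : dist (y (i + 1)) z = dist (y i) z := hpres z hz
          have hnp' : ¬ ∃ w ∈ Fp ∩ Fq, dist (y i) z = dist (y i) w + dist w z := by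
            rintro ⟨w, hw, hweq⟩
            refine hnp ⟨w, hw, ?_⟩
            have h1 : dist (y (i + 1)) w = dist (y i) w := hpres w hw.2
            have t1 : dist (y (i + 1)) x ≤ dist (y (i + 1)) w + dist w x :=
              dist_triangle _ _ _
            have t2 : dist w x ≤ dist w z + dist z x := dist_triangle _ _ _
            linarith
          have hIH := ih.2 z hz hzp hnp'
          have hsep' := hsep z (Or.inr hz) x (Or.inl hxp) hzx
          rw [show ((i + 1) / 2 : ℕ) = (i + 1) / 2 from rfl, heq, hdz]
          have hc : (((i + 1) / 2 : ℕ) : ℝ) ≤ (((i + 1) / 2 : ℕ) : ℝ) := le_refl _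
          linarith
        · -- `x ∈ Fq \ Fp`: the distance is preserved.
          intro x hxq hxp hnp
          have hd : dist (y (i + 1)) x = dist (y i) x := hpres x hxq
          have hnp' : ¬ ∃ w ∈ Fp ∩ Fq, dist (y i) x = dist (y i) w + dist w x := by
            rintro ⟨w, hw, hweq⟩
            exact hnp ⟨w, hw, by rw [hd, hpres w hw.2, hweq]⟩
          have hIH := ih.2 x hxq hxp hnp'
          rw [show ((i + 1 + 1) / 2 : ℕ) = ((i + 1) / 2 : ℕ) from by omega, hd]
          exact hIH
      · -- odd step: extends `p`
        obtain ⟨hpres, hpass⟩ := hodd i ho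
        have hi : i % 2 = 0 := by
          rcases ho with ⟨k, hk⟩; omega
        constructor
        · -- `x ∈ Fp \ Fq`: the distance is preserved.
          intro x hxp hxq hnp
          have hd : dist (y (i + 1)) x = dist (y i) x := hpres x hxp
          have hnp' : ¬ ∃ w ∈ Fp ∩ Fq, dist (y i) x = dist (y i) w + dist w x := by
            rintro ⟨w, hw, hweq⟩
            exact hnp ⟨w, hw, by rw [hd, hpres w hw.1, hweq]⟩
          have hIH := ih.1 x hxp hxq hnp'
          rw [show ((i + 1) / 2 : ℕ) = (i / 2 : ℕ) from by omega, hd]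
          exact hIH
        · -- `x ∈ Fq \ Fp`: the distance passes through `z ∈ Fp \ Fq`, `z ≠ x`.
          intro x hxq hxp hnp
          obtain ⟨z, hz, heq⟩ := hpass x (Or.inr hxq)
          have hzq : z ∉ Fq := fun h => hnp ⟨z, ⟨hz, h⟩, heq⟩
          have hzx : z ≠ x := fun h => hxp (h ▸ hz)
          have hdz : dist (y (i + 1)) z = dist (y i) z := hpres z hz
          have hnp' : ¬ ∃ w ∈ Fp ∩ Fq, dist (y i) z = dist (y i) w + dist w z := by
            rintro ⟨w, hw, hweq⟩
            refine hnp ⟨w, hw, ?_⟩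
            have h1 : dist (y (i + 1)) w = dist (y i) w := hpres w hw.1
            have t1 : dist (y (i + 1)) x ≤ dist (y (i + 1)) w + dist w x :=
              dist_triangle _ _ _
            have t2 : dist w x ≤ dist w z + dist z x := dist_triangle _ _ _
            linarith
          have hIH := ih.1 z hz hzq hnp'
          have hsep' := hsep z (Or.inl hz) x (Or.inr hxq) hzx
          rw [show ((i + 1 + 1) / 2 : ℕ) = (i / 2 : ℕ) + 1 from by omega, heq, hdz]
          push_cast
          linarith
  intro i x hx hnp
  rw [Set.mem_symmDiff] at hx
  rcases hx with ⟨hxp, hxq⟩ | ⟨hxq, hxp⟩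
  · exact (key i).1 x hxp hxq hnp
  · have hIH := (key i).2 x hxq hxp hnp
    have hc : ((i / 2 : ℕ) : ℝ) ≤ (((i + 1) / 2 : ℕ) : ℝ) := by
      exact_mod_cast Nat.div_le_div_right (Nat.le_succ i)
    nlinarith
end
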